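/- arXiv:1506.04763 — 4 statements merged into one kernel-verified Lean document; each statement's English description precedes it below -/
import Mathlib

section
/- Let $W(x) = (1+|x|^2/3)^{-1/2}$, $W_\lambda(x) = \lambda^{1/2}W(\lambda x)$. Then $\lim_{\lambda \to \infty} \| W W_\lambda^3 + W^3 W_\lambda + W^2 W_\lambda^2 \|_{L^{3/2}(\mathbb{R}^3)} = 0$. -/
open MeasureTheory Filter Topology

noncomputable section

abbrev E3 := EuclideanSpace ℝ (Fin 3)

namespace CrossTermsAux

open Metric
open scoped ENNReal NNReal


def W0 : E3 → ℝ := fun x => (1 + ‖x‖^2/3) ^ (-(1:ℝ)/2)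

lemma W0_pos (x : E3) : 0 < W0 x := Real.rpow_pos_of_pos (by positivity) _

lemma W0_nonneg (x : E3) : 0 ≤ W0 x := (W0_pos x).le

lemma W0_le_one (x : E3) : W0 x ≤ 1 :=
  Real.rpow_le_one_of_one_le_of_nonpos (by nlinarith [sq_nonneg ‖x‖]) (by norm_num)

lemma W0_cont : Continuous W0 := by
  apply Continuous.rpow_const (by fun_prop)
  intro x; left; positivity

lemma rpow_rpow {c : ℝ} (hc : 0 ≤ c) (p q : ℝ) : (c ^ p) ^ q = c ^ (p * q) :=
  (Real.rpow_mul hc p q).symm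

lemma W0_le_aux {c t : ℝ} (hc : 0 < c) (ht : 0 < t) (x : E3)
    (h : t ^ 2 ≤ c * (1 + ‖x‖ ^ 2 / 3)) :
    W0 x ≤ c ^ ((1:ℝ)/2) * t ^ (-(1:ℝ)) := by
  have hb : (0:ℝ) < 1 + ‖x‖ ^ 2 / 3 := by positivity
  have h1 : t ≤ (c * (1 + ‖x‖ ^ 2 / 3)) ^ ((1:ℝ)/2) := by
    calc t = (t ^ 2) ^ ((1:ℝ)/2) := by
            rw [← Real.rpow_natCast t 2, rpow_rpow ht.le]; norm_num
      _ ≤ _ := Real.rpow_le_rpow (by positivity) h (by norm_num)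
  have h2 : (c * (1 + ‖x‖ ^ 2 / 3)) ^ (-(1:ℝ)/2) ≤ t ^ (-(1:ℝ)) := by
    rw [show (-(1:ℝ)/2) = -((1:ℝ)/2) by norm_num, Real.rpow_neg (by positivity),
      Real.rpow_neg ht.le, Real.rpow_one]
    exact inv_anti₀ ht h1
  have h3 : W0 x = c ^ ((1:ℝ)/2) * (c * (1 + ‖x‖ ^ 2 / 3)) ^ (-(1:ℝ)/2) := by
    rw [Real.mul_rpow hc.le hb.le, ← mul_assoc, ← Real.rpow_add hc]
    norm_num [W0]
  rw [h3]
  gcongr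

lemma W0_le_bracket (x : E3) : W0 x ≤ 6 ^ ((1:ℝ)/2) * (1 + ‖x‖) ^ (-(1:ℝ)) :=
  W0_le_aux (by norm_num) (by positivity) x (by nlinarith [sq_nonneg (‖x‖ - 1), norm_nonneg x])

lemma W0_le_sing {x : E3} (hx : x ≠ 0) : W0 x ≤ 3 ^ ((1:ℝ)/2) * ‖x‖ ^ (-(1:ℝ)) :=
  W0_le_aux (by norm_num) (norm_pos_iff.mpr hx) x (by nlinarith [sq_nonneg ‖x‖])


lemma lintegral_scale {lam : ℝ} (hlam : 0 < lam) (f : E3 → ℝ≥0∞) (hf : Measurable f) :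
    ∫⁻ x, f (lam • x) = ENNReal.ofReal ((lam ^ 3)⁻¹) * ∫⁻ y, f y := by
  calc ∫⁻ x, f (lam • x)
      = ∫⁻ y, f y ∂(Measure.map (lam • ·) volume) :=
        (lintegral_map hf (measurable_const_smul lam)).symm
    _ = ENNReal.ofReal |(lam ^ Module.finrank ℝ E3)⁻¹| * ∫⁻ y, f y := by
        rw [Measure.map_addHaar_smul volume hlam.ne', lintegral_smul_measure, smul_eq_mul]
    _ = _ := by
        rw [finrank_euclideanSpace_fin, abs_of_nonneg (by positivity)]

lemma K_lt_top : ∫⁻ x : E3, ENNReal.ofReal ((1 + ‖x‖) ^ (-(9:ℝ)/2)) < ∞ := by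
  have h := finite_integral_one_add_norm (E := E3) (μ := volume) (r := 9/2)
    (by rw [finrank_euclideanSpace_fin]; norm_num)
  convert h using 4
  norm_num

lemma meas_oneadd : Measurable fun x : E3 => ENNReal.ofReal ((1 + ‖x‖) ^ (-(9:ℝ)/2)) := by
  fun_prop

lemma ball_sing :
    ∫⁻ x in ball (0:E3) 1, ENNReal.ofReal (‖x‖ ^ (-(3:ℝ)/2)) < ∞ := by
  have hmble : AEMeasurable (fun x : E3 => ‖x‖ ^ (-(3:ℝ)/2))
      (volume.restrict (ball (0:E3) 1)) := by fun_prop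
  rw [lintegral_eq_lintegral_meas_le _ (Eventually.of_forall fun x => by positivity) hmble]
  set ν := volume.restrict (ball (0:E3) 1)
  set mB := volume (ball (0:E3) 1) with hmB
  have hmBfin : mB ≠ ∞ := measure_ball_lt_top.ne
  have hsub : ∀ t : ℝ, 0 < t →
      {a : E3 | t ≤ ‖a‖ ^ (-(3:ℝ)/2)} ⊆ closedBall 0 (t ^ ((-(3:ℝ)/2)⁻¹)) := by
    intro t ht a ha
    simp only [Set.mem_setOf_eq] at ha
    have ha0 : a ≠ 0 := by
      rintro rfl
      simp only [norm_zero] at ha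
      rw [Real.zero_rpow (by norm_num)] at ha
      linarith
    have hna : 0 < ‖a‖ := norm_pos_iff.mpr ha0
    rw [mem_closedBall_zero_iff]
    exact (Real.le_rpow_inv_iff_of_neg hna ht (by norm_num)).mpr ha
  have hb1 : ∀ t : ℝ, ν {a : E3 | t ≤ ‖a‖ ^ (-(3:ℝ)/2)} ≤ mB := by
    intro t
    calc ν _ ≤ ν Set.univ := measure_mono (Set.subset_univ _)
      _ = mB := by simp [ν, hmB]
  have hb2 : ∀ t : ℝ, 1 ≤ t →
      ν {a : E3 | t ≤ ‖a‖ ^ (-(3:ℝ)/2)} ≤ ENNReal.ofReal (t ^ (-(2:ℝ))) * mB := by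
    intro t ht
    have ht0 : (0:ℝ) < t := lt_of_lt_of_le one_pos ht
    calc ν {a : E3 | t ≤ ‖a‖ ^ (-(3:ℝ)/2)}
        ≤ volume (closedBall (0:E3) (t ^ ((-(3:ℝ)/2)⁻¹))) :=
          le_trans (measure_mono (hsub t ht0)) (Measure.restrict_le_self _)
      _ = ENNReal.ofReal ((t ^ ((-(3:ℝ)/2)⁻¹)) ^ Module.finrank ℝ E3) * mB :=
          Measure.addHaar_closedBall _ _ (by positivity)
      _ = ENNReal.ofReal (t ^ (-(2:ℝ))) * mB := by
          rw [finrank_euclideanSpace_fin, ← Real.rpow_natCast (t ^ _) 3,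
            ← Real.rpow_mul ht0.le]
          norm_num
  calc ∫⁻ t in Set.Ioi (0:ℝ), ν {a : E3 | t ≤ ‖a‖ ^ (-(3:ℝ)/2)}
      ≤ ∫⁻ t in Set.Ioc (0:ℝ) 1 ∪ Set.Ioi 1, ν {a : E3 | t ≤ ‖a‖ ^ (-(3:ℝ)/2)} :=
        lintegral_mono_set Set.Ioi_subset_Ioc_union_Ioi
    _ ≤ (∫⁻ t in Set.Ioc (0:ℝ) 1, ν {a : E3 | t ≤ ‖a‖ ^ (-(3:ℝ)/2)})
        + ∫⁻ t in Set.Ioi (1:ℝ), ν {a : E3 | t ≤ ‖a‖ ^ (-(3:ℝ)/2)} :=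
        lintegral_union_le _ _ _
    _ < ∞ := by
        apply ENNReal.add_lt_top.2
        constructor
        · calc ∫⁻ t in Set.Ioc (0:ℝ) 1, ν {a : E3 | t ≤ ‖a‖ ^ (-(3:ℝ)/2)}
              ≤ ∫⁻ _ in Set.Ioc (0:ℝ) 1, mB :=
                setLIntegral_mono measurable_const fun t _ => hb1 t
            _ = mB * volume (Set.Ioc (0:ℝ) 1) := setLIntegral_const _ _
            _ < ∞ := by
                rw [Real.volume_Ioc]
                exact ENNReal.mul_lt_top hmBfin.lt_top (by norm_num)
        · calc ∫⁻ t in Set.Ioi (1:ℝ), ν {a : E3 | t ≤ ‖a‖ ^ (-(3:ℝ)/2)}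
              ≤ ∫⁻ t in Set.Ioi (1:ℝ), ENNReal.ofReal (t ^ (-(2:ℝ))) * mB := by
                apply setLIntegral_mono (by fun_prop) fun t ht => hb2 t ht.le
            _ = (∫⁻ t in Set.Ioi (1:ℝ), ENNReal.ofReal (t ^ (-(2:ℝ)))) * mB :=
                lintegral_mul_const' _ _ hmBfin
            _ < ∞ := by
                apply ENNReal.mul_lt_top _ hmBfin.lt_top
                exact (integrableOn_Ioi_rpow_of_lt (by norm_num) one_pos).setLIntegral_lt_top


lemma K2_lt_top :
    ∫⁻ x : E3, ENNReal.ofReal (‖x‖ ^ (-(3:ℝ)/2) * (1 + ‖x‖) ^ (-(9:ℝ)/2)) < ∞ := by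
  rw [← lintegral_add_compl
    (fun x : E3 => ENNReal.ofReal (‖x‖ ^ (-(3:ℝ)/2) * (1 + ‖x‖) ^ (-(9:ℝ)/2)))
    measurableSet_ball (μ := volume) (A := ball (0:E3) 1)]
  apply ENNReal.add_lt_top.2
  constructor
  · calc ∫⁻ x in ball (0:E3) 1, ENNReal.ofReal (‖x‖ ^ (-(3:ℝ)/2) * (1 + ‖x‖) ^ (-(9:ℝ)/2))
        ≤ ∫⁻ x in ball (0:E3) 1, ENNReal.ofReal (‖x‖ ^ (-(3:ℝ)/2)) := by
          apply setLIntegral_mono (by fun_prop) fun x _ => ?_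
          apply ENNReal.ofReal_le_ofReal
          have h1 : (1 + ‖x‖) ^ (-(9:ℝ)/2) ≤ 1 :=
            Real.rpow_le_one_of_one_le_of_nonpos (by nlinarith [norm_nonneg x]) (by norm_num)
          calc ‖x‖ ^ (-(3:ℝ)/2) * (1 + ‖x‖) ^ (-(9:ℝ)/2) ≤ ‖x‖ ^ (-(3:ℝ)/2) * 1 := by
                gcongr
            _ = _ := mul_one _
      _ < ∞ := ball_sing
  · calc ∫⁻ x in (ball (0:E3) 1)ᶜ, ENNReal.ofReal (‖x‖ ^ (-(3:ℝ)/2) * (1 + ‖x‖) ^ (-(9:ℝ)/2))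
        ≤ ∫⁻ x in (ball (0:E3) 1)ᶜ, ENNReal.ofReal ((1 + ‖x‖) ^ (-(9:ℝ)/2)) := by
          apply setLIntegral_mono (by fun_prop) fun x hx => ?_
          apply ENNReal.ofReal_le_ofReal
          have hx1 : (1:ℝ) ≤ ‖x‖ := by
            simpa [mem_ball, dist_zero_right] using hx
          have h1 : ‖x‖ ^ (-(3:ℝ)/2) ≤ 1 :=
            Real.rpow_le_one_of_one_le_of_nonpos hx1 (by norm_num)
          calc ‖x‖ ^ (-(3:ℝ)/2) * (1 + ‖x‖) ^ (-(9:ℝ)/2)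
              ≤ 1 * (1 + ‖x‖) ^ (-(9:ℝ)/2) := by gcongr
            _ = _ := one_mul _
      _ ≤ ∫⁻ x : E3, ENNReal.ofReal ((1 + ‖x‖) ^ (-(9:ℝ)/2)) := setLIntegral_le_lintegral _ _
      _ < ∞ := K_lt_top

lemma pt1 {lam : ℝ} (hlam : 1 ≤ lam) (x : E3) :
    (W0 x * (lam ^ ((1:ℝ)/2) * W0 (lam • x)) ^ 3) ^ ((3:ℝ)/2)
      ≤ 6 ^ ((9:ℝ)/4) * lam ^ ((9:ℝ)/4) * (1 + ‖lam • x‖) ^ (-(9:ℝ)/2) := by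
  have h0 : (0:ℝ) < lam := lt_of_lt_of_le one_pos hlam
  set s : ℝ := ‖lam • x‖ with hs
  have hs0 : (0:ℝ) ≤ s := norm_nonneg _
  have h1 : W0 x * (lam ^ ((1:ℝ)/2) * W0 (lam • x)) ^ 3
      ≤ lam ^ ((3:ℝ)/2) * (6 ^ ((3:ℝ)/2) * (1 + s) ^ (-(3:ℝ))) := by
    calc W0 x * (lam ^ ((1:ℝ)/2) * W0 (lam • x)) ^ 3
        ≤ 1 * (lam ^ ((1:ℝ)/2) * (6 ^ ((1:ℝ)/2) * (1 + s) ^ (-(1:ℝ)))) ^ 3 := by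
          gcongr
          all_goals first
            | exact W0_le_one _
            | exact W0_le_bracket _
            | exact mul_nonneg (Real.rpow_nonneg h0.le _) (W0_nonneg _)
            | exact pow_nonneg (mul_nonneg (Real.rpow_nonneg h0.le _) (W0_nonneg _)) _
            | positivity
      _ = lam ^ ((3:ℝ)/2) * (6 ^ ((3:ℝ)/2) * (1 + s) ^ (-(3:ℝ))) := by
          rw [one_mul, mul_pow, mul_pow,
            ← Real.rpow_natCast (lam ^ ((1:ℝ)/2)) 3,
            ← Real.rpow_natCast ((6:ℝ) ^ ((1:ℝ)/2)) 3,
            ← Real.rpow_natCast ((1 + s) ^ (-(1:ℝ))) 3,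
            rpow_rpow h0.le, rpow_rpow (by norm_num : (0:ℝ) ≤ 6), rpow_rpow (by positivity)]
          norm_num
  calc (W0 x * (lam ^ ((1:ℝ)/2) * W0 (lam • x)) ^ 3) ^ ((3:ℝ)/2)
      ≤ (lam ^ ((3:ℝ)/2) * (6 ^ ((3:ℝ)/2) * (1 + s) ^ (-(3:ℝ)))) ^ ((3:ℝ)/2) :=
        Real.rpow_le_rpow
          (mul_nonneg (W0_nonneg _)
            (pow_nonneg (mul_nonneg (Real.rpow_nonneg h0.le _) (W0_nonneg _)) _)) h1
          (by norm_num)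
    _ = 6 ^ ((9:ℝ)/4) * lam ^ ((9:ℝ)/4) * (1 + s) ^ (-(9:ℝ)/2) := by
        rw [Real.mul_rpow (by positivity) (by positivity),
          Real.mul_rpow (by positivity) (by positivity),
          rpow_rpow h0.le, rpow_rpow (by norm_num : (0:ℝ) ≤ 6), rpow_rpow (by positivity)]
        norm_num
        ring
lemma pt2 {lam : ℝ} (hlam : 1 ≤ lam) {x : E3} (hx : x ≠ 0) :
    ((W0 x) ^ 3 * (lam ^ ((1:ℝ)/2) * W0 (lam • x))) ^ ((3:ℝ)/2)
      ≤ 6 ^ ((9:ℝ)/4) * 3 ^ ((3:ℝ)/4) * lam ^ (-(3:ℝ)/4)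
        * (‖x‖ ^ (-(3:ℝ)/2) * (1 + ‖x‖) ^ (-(9:ℝ)/2)) := by
  have h0 : (0:ℝ) < lam := lt_of_lt_of_le one_pos hlam
  have hnx : (0:ℝ) < ‖x‖ := norm_pos_iff.mpr hx
  have hsm : ‖lam • x‖ = lam * ‖x‖ := by
    rw [norm_smul, Real.norm_eq_abs, abs_of_pos h0]
  have h1 : (W0 x) ^ 3 * (lam ^ ((1:ℝ)/2) * W0 (lam • x))
      ≤ (6 ^ ((3:ℝ)/2) * (1 + ‖x‖) ^ (-(3:ℝ)))
        * (3 ^ ((1:ℝ)/2) * (lam ^ (-(1:ℝ)/2) * ‖x‖ ^ (-(1:ℝ)))) := by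
    have hA : (W0 x) ^ 3 ≤ 6 ^ ((3:ℝ)/2) * (1 + ‖x‖) ^ (-(3:ℝ)) := by
      calc (W0 x) ^ 3 ≤ (6 ^ ((1:ℝ)/2) * (1 + ‖x‖) ^ (-(1:ℝ))) ^ 3 := by
            gcongr
            · exact W0_nonneg _
            · exact W0_le_bracket _
        _ = 6 ^ ((3:ℝ)/2) * (1 + ‖x‖) ^ (-(3:ℝ)) := by
            rw [mul_pow, ← Real.rpow_natCast ((6:ℝ) ^ ((1:ℝ)/2)) 3,
              ← Real.rpow_natCast ((1 + ‖x‖) ^ (-(1:ℝ))) 3,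
              rpow_rpow (by norm_num : (0:ℝ) ≤ 6), rpow_rpow (by positivity)]
            norm_num
    have hB : lam ^ ((1:ℝ)/2) * W0 (lam • x)
        ≤ 3 ^ ((1:ℝ)/2) * (lam ^ (-(1:ℝ)/2) * ‖x‖ ^ (-(1:ℝ))) := by
      have hsx : lam • x ≠ 0 := smul_ne_zero h0.ne' hx
      calc lam ^ ((1:ℝ)/2) * W0 (lam • x)
          ≤ lam ^ ((1:ℝ)/2) * (3 ^ ((1:ℝ)/2) * ‖lam • x‖ ^ (-(1:ℝ))) := by
            gcongr
            · exact W0_le_sing hsx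
        _ = 3 ^ ((1:ℝ)/2) * (lam ^ (-(1:ℝ)/2) * ‖x‖ ^ (-(1:ℝ))) := by
            have hh : lam ^ ((1:ℝ)/2) * lam ^ (-(1:ℝ)) = lam ^ (-(1:ℝ)/2) := by
              rw [← Real.rpow_add h0]; norm_num
            rw [hsm, Real.mul_rpow h0.le hnx.le, ← hh]
            ring
    exact mul_le_mul hA hB
      (mul_nonneg (Real.rpow_nonneg h0.le _) (W0_nonneg _)) (by positivity)
  calc ((W0 x) ^ 3 * (lam ^ ((1:ℝ)/2) * W0 (lam • x))) ^ ((3:ℝ)/2)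
      ≤ ((6 ^ ((3:ℝ)/2) * (1 + ‖x‖) ^ (-(3:ℝ)))
        * (3 ^ ((1:ℝ)/2) * (lam ^ (-(1:ℝ)/2) * ‖x‖ ^ (-(1:ℝ))))) ^ ((3:ℝ)/2) :=
        Real.rpow_le_rpow
          (mul_nonneg (pow_nonneg (W0_nonneg _) _)
            (mul_nonneg (Real.rpow_nonneg h0.le _) (W0_nonneg _))) h1 (by norm_num)
    _ = 6 ^ ((9:ℝ)/4) * 3 ^ ((3:ℝ)/4) * lam ^ (-(3:ℝ)/4)
        * (‖x‖ ^ (-(3:ℝ)/2) * (1 + ‖x‖) ^ (-(9:ℝ)/2)) := by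
        rw [Real.mul_rpow (by positivity) (by positivity),
          Real.mul_rpow (by positivity) (by positivity),
          Real.mul_rpow (by positivity) (by positivity),
          Real.mul_rpow (by positivity) (by positivity),
          rpow_rpow (by norm_num : (0:ℝ) ≤ 6), rpow_rpow (by positivity),
          rpow_rpow (by norm_num : (0:ℝ) ≤ 3), rpow_rpow h0.le, rpow_rpow hnx.le]
        norm_num
        ring
def Kc : ℝ≥0∞ := ∫⁻ x : E3, ENNReal.ofReal ((1 + ‖x‖) ^ (-(9:ℝ)/2))
def K2c : ℝ≥0∞ := ∫⁻ x : E3, ENNReal.ofReal (‖x‖ ^ (-(3:ℝ)/2) * (1 + ‖x‖) ^ (-(9:ℝ)/2))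

lemma rpow_fold {lam : ℝ} (h0 : 0 < lam) :
    lam ^ ((9:ℝ)/4) * (lam ^ 3)⁻¹ = lam ^ (-(3:ℝ)/4) := by
  rw [← Real.rpow_natCast lam 3, ← Real.rpow_neg h0.le, ← Real.rpow_add h0]
  norm_num

lemma estA {lam : ℝ} (hlam : 1 ≤ lam) :
    ∫⁻ x : E3, ENNReal.ofReal ((W0 x * (lam ^ ((1:ℝ)/2) * W0 (lam • x)) ^ 3) ^ ((3:ℝ)/2))
      ≤ ENNReal.ofReal (lam ^ (-(3:ℝ)/4)) * (ENNReal.ofReal (6 ^ ((9:ℝ)/4)) * Kc) := by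
  have h0 : (0:ℝ) < lam := lt_of_lt_of_le one_pos hlam
  calc ∫⁻ x : E3, ENNReal.ofReal ((W0 x * (lam ^ ((1:ℝ)/2) * W0 (lam • x)) ^ 3) ^ ((3:ℝ)/2))
      ≤ ∫⁻ x : E3, ENNReal.ofReal (6 ^ ((9:ℝ)/4) * lam ^ ((9:ℝ)/4)
          * (1 + ‖lam • x‖) ^ (-(9:ℝ)/2)) :=
        lintegral_mono fun x => ENNReal.ofReal_le_ofReal (pt1 hlam x)
    _ = ∫⁻ x : E3, ENNReal.ofReal (6 ^ ((9:ℝ)/4) * lam ^ ((9:ℝ)/4))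
          * ENNReal.ofReal ((1 + ‖lam • x‖) ^ (-(9:ℝ)/2)) :=
        lintegral_congr fun x => ENNReal.ofReal_mul (by positivity)
    _ = ENNReal.ofReal (6 ^ ((9:ℝ)/4) * lam ^ ((9:ℝ)/4))
          * ∫⁻ x : E3, (fun y => ENNReal.ofReal ((1 + ‖y‖) ^ (-(9:ℝ)/2))) (lam • x) :=
        lintegral_const_mul' _ _ ENNReal.ofReal_ne_top
    _ = ENNReal.ofReal (6 ^ ((9:ℝ)/4) * lam ^ ((9:ℝ)/4))
          * (ENNReal.ofReal ((lam ^ 3)⁻¹) * Kc) := by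
        rw [lintegral_scale h0 _ meas_oneadd]; rfl
    _ = ENNReal.ofReal (lam ^ (-(3:ℝ)/4)) * (ENNReal.ofReal (6 ^ ((9:ℝ)/4)) * Kc) := by
        rw [← mul_assoc, ← ENNReal.ofReal_mul (by positivity), mul_assoc,
          rpow_fold h0, mul_comm ((6:ℝ) ^ ((9:ℝ)/4)), ENNReal.ofReal_mul (by positivity),
          mul_assoc]

lemma ae_ne_zero : ∀ᵐ x : E3 ∂volume, x ≠ 0 := by
  rw [ae_iff]
  simp only [not_not]
  have : {x : E3 | x = 0} = {0} := by ext y; simp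
  rw [this]
  exact measure_singleton 0

lemma estB {lam : ℝ} (hlam : 1 ≤ lam) :
    ∫⁻ x : E3, ENNReal.ofReal (((W0 x) ^ 3 * (lam ^ ((1:ℝ)/2) * W0 (lam • x))) ^ ((3:ℝ)/2))
      ≤ ENNReal.ofReal (lam ^ (-(3:ℝ)/4))
        * (ENNReal.ofReal (6 ^ ((9:ℝ)/4) * 3 ^ ((3:ℝ)/4)) * K2c) := by
  have h0 : (0:ℝ) < lam := lt_of_lt_of_le one_pos hlam
  calc ∫⁻ x : E3, ENNReal.ofReal (((W0 x) ^ 3 * (lam ^ ((1:ℝ)/2) * W0 (lam • x))) ^ ((3:ℝ)/2))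
      ≤ ∫⁻ x : E3, ENNReal.ofReal (6 ^ ((9:ℝ)/4) * 3 ^ ((3:ℝ)/4) * lam ^ (-(3:ℝ)/4)
          * (‖x‖ ^ (-(3:ℝ)/2) * (1 + ‖x‖) ^ (-(9:ℝ)/2))) := by
        apply lintegral_mono_ae
        filter_upwards [ae_ne_zero] with x hx
        exact ENNReal.ofReal_le_ofReal (pt2 hlam hx)
    _ = ∫⁻ x : E3, ENNReal.ofReal (6 ^ ((9:ℝ)/4) * 3 ^ ((3:ℝ)/4) * lam ^ (-(3:ℝ)/4))
          * ENNReal.ofReal (‖x‖ ^ (-(3:ℝ)/2) * (1 + ‖x‖) ^ (-(9:ℝ)/2)) :=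
        lintegral_congr fun x => ENNReal.ofReal_mul (by positivity)
    _ = ENNReal.ofReal (6 ^ ((9:ℝ)/4) * 3 ^ ((3:ℝ)/4) * lam ^ (-(3:ℝ)/4)) * K2c :=
        lintegral_const_mul' _ _ ENNReal.ofReal_ne_top
    _ = ENNReal.ofReal (lam ^ (-(3:ℝ)/4))
        * (ENNReal.ofReal (6 ^ ((9:ℝ)/4) * 3 ^ ((3:ℝ)/4)) * K2c) := by
        rw [mul_comm ((6:ℝ) ^ ((9:ℝ)/4) * (3:ℝ) ^ ((3:ℝ)/4)),
          ENNReal.ofReal_mul (by positivity), mul_assoc]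
lemma Kc_fin : Kc ≠ ∞ := K_lt_top.ne
lemma K2c_fin : K2c ≠ ∞ := K2_lt_top.ne
lemma one_le_p : (1:ℝ≥0∞) ≤ 3/2 := by
  rw [show (3:ℝ≥0∞)/2 = ENNReal.ofReal (3/2) by
    rw [ENNReal.ofReal_div_of_pos] <;> norm_num]
  simp only [ENNReal.one_le_ofReal]
  norm_num

lemma eLp_eq (f : E3 → ℝ) (hf : ∀ x, 0 ≤ f x) :
    eLpNorm f (3/2) volume
      = (∫⁻ x : E3, ENNReal.ofReal ((f x) ^ ((3:ℝ)/2))) ^ ((2:ℝ)/3) := by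
  rw [eLpNorm_eq_lintegral_rpow_enorm_toReal (by norm_num)
    ((ENNReal.div_lt_top (by norm_num) (by norm_num)).ne)]
  have hpt : ((3:ℝ≥0∞)/2).toReal = 3/2 := by rw [ENNReal.toReal_div]; norm_num
  rw [hpt]
  have h1 : ∀ x : E3, ‖f x‖ₑ ^ ((3:ℝ)/2) = ENNReal.ofReal ((f x) ^ ((3:ℝ)/2)) :=
    fun x => by
      rw [Real.enorm_eq_ofReal (hf x), ENNReal.ofReal_rpow_of_nonneg (hf x) (by norm_num)]
  rw [lintegral_congr h1]
  norm_num

lemma tendsto_bound (C : ℝ≥0∞) (hC : C ≠ ∞) :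
    Tendsto (fun lam : ℝ => ENNReal.ofReal (lam ^ (-(3:ℝ)/4)) * C) atTop (𝓝 0) := by
  have h : Tendsto (fun lam : ℝ => lam ^ (-(3:ℝ)/4)) atTop (𝓝 0) := by
    simpa [show (-(3:ℝ)/4) = -((3:ℝ)/4) from by norm_num] using
      tendsto_rpow_neg_atTop (y := 3/4) (by norm_num)
  have h2 : Tendsto (fun lam : ℝ => ENNReal.ofReal (lam ^ (-(3:ℝ)/4))) atTop (𝓝 0) := by
    simpa [Function.comp_def] using (ENNReal.continuous_ofReal.tendsto 0).comp h
  simpa using ENNReal.Tendsto.mul_const h2 (Or.inr hC)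

lemma h1 : Tendsto (fun lam : ℝ =>
    eLpNorm (fun x : E3 => W0 x * (lam ^ ((1:ℝ)/2) * W0 (lam • x)) ^ 3) (3/2) volume)
    atTop (𝓝 0) := by
  have key : Tendsto (fun lam : ℝ =>
      ∫⁻ x : E3, ENNReal.ofReal ((W0 x * (lam ^ ((1:ℝ)/2) * W0 (lam • x)) ^ 3) ^ ((3:ℝ)/2)))
      atTop (𝓝 0) := by
    apply tendsto_of_tendsto_of_tendsto_of_le_of_le'
      tendsto_const_nhds (tendsto_bound _ (ENNReal.mul_ne_top ENNReal.ofReal_ne_top Kc_fin))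
      (Eventually.of_forall fun _ => zero_le)
      (eventually_atTop.2 ⟨1, fun lam hlam => estA hlam⟩)
  have hc : Continuous (fun z : ℝ≥0∞ => z ^ ((2:ℝ)/3)) := ENNReal.continuous_rpow_const
  have comp := (hc.tendsto 0).comp key
  rw [ENNReal.zero_rpow_of_pos (by norm_num)] at comp
  apply comp.congr'
  filter_upwards [eventually_ge_atTop (1:ℝ)] with lam hlam
  have h0 : (0:ℝ) ≤ lam := le_trans zero_le_one hlam
  exact (eLp_eq _ fun x => mul_nonneg (W0_nonneg x)
    (pow_nonneg (mul_nonneg (Real.rpow_nonneg h0 _) (W0_nonneg _)) _)).symm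

lemma h2 : Tendsto (fun lam : ℝ =>
    eLpNorm (fun x : E3 => (W0 x) ^ 3 * (lam ^ ((1:ℝ)/2) * W0 (lam • x))) (3/2) volume)
    atTop (𝓝 0) := by
  have key : Tendsto (fun lam : ℝ =>
      ∫⁻ x : E3, ENNReal.ofReal (((W0 x) ^ 3 * (lam ^ ((1:ℝ)/2) * W0 (lam • x))) ^ ((3:ℝ)/2)))
      atTop (𝓝 0) := by
    apply tendsto_of_tendsto_of_tendsto_of_le_of_le'
      tendsto_const_nhds (tendsto_bound _ (ENNReal.mul_ne_top ENNReal.ofReal_ne_top K2c_fin))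
      (Eventually.of_forall fun _ => zero_le)
      (eventually_atTop.2 ⟨1, fun lam hlam => estB hlam⟩)
  have hc : Continuous (fun z : ℝ≥0∞ => z ^ ((2:ℝ)/3)) := ENNReal.continuous_rpow_const
  have comp := (hc.tendsto 0).comp key
  rw [ENNReal.zero_rpow_of_pos (by norm_num)] at comp
  apply comp.congr'
  filter_upwards [eventually_ge_atTop (1:ℝ)] with lam hlam
  have h0 : (0:ℝ) ≤ lam := le_trans zero_le_one hlam
  exact (eLp_eq _ fun x => mul_nonneg (pow_nonneg (W0_nonneg x) _)
    (mul_nonneg (Real.rpow_nonneg h0 _) (W0_nonneg _))).symm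

theorem main : Tendsto
      (fun lam : ℝ =>
        eLpNorm
          (fun x : E3 => W0 x * (lam ^ ((1:ℝ)/2) * W0 (lam • x)) ^ 3
            + (W0 x) ^ 3 * (lam ^ ((1:ℝ)/2) * W0 (lam • x))
            + (W0 x) ^ 2 * (lam ^ ((1:ℝ)/2) * W0 (lam • x)) ^ 2)
          (3/2) volume)
      atTop (𝓝 0) := by
  set c : ℝ≥0∞ := (‖(3/2:ℝ)‖₊ : ℝ≥0∞) with hc
  apply tendsto_of_tendsto_of_tendsto_of_le_of_le'
    (g := fun _ => (0:ℝ≥0∞))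
    (h := fun lam => c * (eLpNorm (fun x : E3 => W0 x * (lam ^ ((1:ℝ)/2) * W0 (lam • x)) ^ 3)
        (3/2) volume
      + eLpNorm (fun x : E3 => (W0 x) ^ 3 * (lam ^ ((1:ℝ)/2) * W0 (lam • x))) (3/2) volume))
    tendsto_const_nhds
  · simpa using ENNReal.Tendsto.const_mul (h1.add h2) (Or.inr ENNReal.coe_ne_top)
  · exact Eventually.of_forall fun _ => zero_le
  · filter_upwards [eventually_ge_atTop (1:ℝ)] with lam hlam
    have h0 : (0:ℝ) ≤ lam := le_trans zero_le_one hlam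
    have hg : Continuous (fun x : E3 => lam ^ ((1:ℝ)/2) * W0 (lam • x)) :=
      continuous_const.mul (W0_cont.comp (continuous_const_smul lam))
    have hm1 : AEStronglyMeasurable
        (fun x : E3 => W0 x * (lam ^ ((1:ℝ)/2) * W0 (lam • x)) ^ 3) volume :=
      (W0_cont.mul (hg.pow 3)).aestronglyMeasurable
    have hm2 : AEStronglyMeasurable
        (fun x : E3 => (W0 x) ^ 3 * (lam ^ ((1:ℝ)/2) * W0 (lam • x))) volume :=
      ((W0_cont.pow 3).mul hg).aestronglyMeasurable
    calc eLpNorm (fun x : E3 => W0 x * (lam ^ ((1:ℝ)/2) * W0 (lam • x)) ^ 3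
            + (W0 x) ^ 3 * (lam ^ ((1:ℝ)/2) * W0 (lam • x))
            + (W0 x) ^ 2 * (lam ^ ((1:ℝ)/2) * W0 (lam • x)) ^ 2) (3/2) volume
        ≤ eLpNorm (fun x : E3 => (3/2:ℝ) * (W0 x * (lam ^ ((1:ℝ)/2) * W0 (lam • x)) ^ 3
            + ((W0 x) ^ 3 * (lam ^ ((1:ℝ)/2) * W0 (lam • x))))) (3/2) volume := by
          apply eLpNorm_mono fun x => ?_
          set a := W0 x
          set b := lam ^ ((1:ℝ)/2) * W0 (lam • x) with hb
          have ha : 0 ≤ a := W0_nonneg x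
          have hbn : 0 ≤ b := mul_nonneg (Real.rpow_nonneg h0 _) (W0_nonneg _)
          rw [Real.norm_of_nonneg (by positivity), Real.norm_of_nonneg (by positivity)]
          nlinarith [mul_nonneg (mul_nonneg ha hbn) (sq_nonneg (a - b)),
            mul_nonneg ha (pow_nonneg hbn 3), mul_nonneg (pow_nonneg ha 3) hbn]
      _ = c * eLpNorm (fun x : E3 => W0 x * (lam ^ ((1:ℝ)/2) * W0 (lam • x)) ^ 3
            + ((W0 x) ^ 3 * (lam ^ ((1:ℝ)/2) * W0 (lam • x)))) (3/2) volume := by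
          rw [hc, ← enorm_eq_nnnorm, ← eLpNorm_const_smul (3/2:ℝ)]
          rfl
      _ ≤ _ := by
          gcongr
          exact eLpNorm_add_le hm1 hm2 one_le_p
end CrossTermsAux

/-- Cross terms between the Aubin–Talenti bubble `W` and its rescaling `W_λ`
tend to `0` in `L^{3/2}(ℝ³)` as `λ → ∞`. -/
theorem cross_terms_vanish
    (W : E3 → ℝ) (hW : W = fun x => (1 + ‖x‖^2/3) ^ (-(1:ℝ)/2))
    (Wl : ℝ → E3 → ℝ)
    (hWl : ∀ lam : ℝ, Wl lam = fun x => lam ^ ((1:ℝ)/2) * W (lam • x)) :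
    Tendsto
      (fun lam =>
        eLpNorm
          (fun x => W x * (Wl lam x)^3 + (W x)^3 * Wl lam x + (W x)^2 * (Wl lam x)^2)
          (3/2) volume)
      atTop (nhds 0) := by
  have hWW : W = CrossTermsAux.W0 := hW
  subst hWW
  simp only [hWl]
  exact CrossTermsAux.main
end
end

section
/- For every $f: (0,\infty) \to \mathbb{R}$ absolutely continuous with $f(\rho) \to 0$ as $\rho\to\infty$ and $\int_0^\infty |f'(\rho)|^2 \rho^2 d\rho < \infty$, one has $\left\| \sup_{\rho > t} |f(\rho)| \right\|_{L^2_t(0,\infty)}^2 \le C \int_0^\infty |f'(\rho)|^2 \rho^2\, d\rho$ for an absolute constant $C$. -/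
open MeasureTheory Filter Topology ENNReal

noncomputable section

private lemma conj22 : Real.HolderConjugate 2 2 := ⟨by norm_num, by norm_num, by norm_num⟩

/-- Cauchy–Schwarz for lintegrals. -/
private lemma lint_CS {S : Set ℝ} {u v : ℝ → ℝ≥0∞}
    (hu : AEMeasurable u (volume.restrict S)) (hv : AEMeasurable v (volume.restrict S)) :
    ∫⁻ s in S, u s * v s ≤
      (∫⁻ s in S, (u s) ^ (2:ℝ)) ^ ((1:ℝ)/2) * (∫⁻ s in S, (v s) ^ (2:ℝ)) ^ ((1:ℝ)/2) := by
  simpa using ENNReal.lintegral_mul_le_Lp_mul_Lq (volume.restrict S) conj22 hu hv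

private lemma sq_half (x : ℝ≥0∞) : (x ^ ((1:ℝ)/2)) ^ 2 = x := by
  rw [← ENNReal.rpow_natCast (x ^ ((1:ℝ)/2)) 2, ← ENNReal.rpow_mul]
  norm_num

/-- Weighted trace inequality: `‖sup_{ρ>t}|f(ρ)|‖²_{L²_t(0,∞)} ≤ C ∫_0^∞ |f'(ρ)|²ρ² dρ`
for `f` vanishing at infinity. -/
theorem sup_tail_L2_bound :
    ∃ C : ℝ≥0∞, 0 < C ∧ C < ⊤ ∧
      ∀ f f' : ℝ → ℝ,
        (∀ ρ, 0 < ρ → HasDerivAt f (f' ρ) ρ) →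
        Tendsto f atTop (nhds 0) →
        (∫⁻ ρ in Set.Ioi (0:ℝ), ENNReal.ofReal (|f' ρ|^2 * ρ^2)) < ⊤ →
        (∫⁻ t in Set.Ioi (0:ℝ),
            (⨆ (ρ : ℝ) (_ : t < ρ), ENNReal.ofReal |f ρ|)^2) ≤
          C * ∫⁻ ρ in Set.Ioi (0:ℝ), ENNReal.ofReal (|f' ρ|^2 * ρ^2) := by
  refine ⟨4, by norm_num, by norm_num, ?_⟩
  intro f f' hderiv hlim hfin
  set g : ℝ → ℝ := fun s => |deriv f s| with hgdef
  have hgnn : ∀ s, 0 ≤ g s := fun s => abs_nonneg _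
  have hgeq : ∀ s ∈ Set.Ioi (0:ℝ), |f' s| = g s := by
    intro s hs
    rw [hgdef]
    simp only
    rw [(hderiv s hs).deriv]
  have hgmeas : Measurable g := (measurable_deriv f).abs
  have hRHS : (∫⁻ ρ in Set.Ioi (0:ℝ), ENNReal.ofReal (|f' ρ|^2 * ρ^2))
      = ∫⁻ s in Set.Ioi (0:ℝ), ENNReal.ofReal (g s ^ 2 * s ^ 2) := by
    refine setLIntegral_congr_fun measurableSet_Ioi (fun s hs => ?_)
    rw [hgeq s hs]
  rw [hRHS] at hfin ⊢
  -- tail power integrals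
  have hT : ∀ t : ℝ, 0 < t → ∀ r : ℝ, r < -1 →
      ∫⁻ s in Set.Ioi t, (ENNReal.ofReal s) ^ r = ENNReal.ofReal (-t ^ (r+1) / (r+1)) := by
    intro t ht r hr
    calc ∫⁻ s in Set.Ioi t, (ENNReal.ofReal s) ^ r
        = ∫⁻ s in Set.Ioi t, ENNReal.ofReal (s ^ r) :=
          setLIntegral_congr_fun measurableSet_Ioi
            (fun s hs => ENNReal.ofReal_rpow_of_pos (ht.trans hs))
      _ = ENNReal.ofReal (∫ s in Set.Ioi t, s ^ r) := by
          rw [ofReal_integral_eq_lintegral_ofReal (integrableOn_Ioi_rpow_of_lt hr ht)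
            ((ae_restrict_iff' measurableSet_Ioi).mpr
              (ae_of_all _ fun s hs => Real.rpow_nonneg (le_of_lt (ht.trans hs)) r))]
      _ = ENNReal.ofReal (-t ^ (r+1) / (r+1)) := by rw [integral_Ioi_rpow_of_lt hr ht]
  -- finiteness of the tail integral of g
  have hGfin : ∀ ρ : ℝ, 0 < ρ → (∫⁻ s in Set.Ioi ρ, ENNReal.ofReal (g s)) < ⊤ := by
    intro ρ hρ
    have h1 : AEMeasurable (fun s => ENNReal.ofReal (g s * s)) (volume.restrict (Set.Ioi ρ)) :=
      (ENNReal.measurable_ofReal.comp (hgmeas.mul measurable_id)).aemeasurable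
    have h2 : AEMeasurable (fun s : ℝ => (ENNReal.ofReal s) ^ (-1:ℝ))
        (volume.restrict (Set.Ioi ρ)) :=
      (ENNReal.measurable_ofReal.pow_const _).aemeasurable
    have step : (∫⁻ s in Set.Ioi ρ, ENNReal.ofReal (g s)) ≤
        (∫⁻ s in Set.Ioi ρ, (ENNReal.ofReal (g s * s)) ^ (2:ℝ)) ^ ((1:ℝ)/2) *
        (∫⁻ s in Set.Ioi ρ, ((ENNReal.ofReal s) ^ (-1:ℝ)) ^ (2:ℝ)) ^ ((1:ℝ)/2) := by
      refine le_trans (le_of_eq ?_) (lint_CS h1 h2)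
      refine setLIntegral_congr_fun measurableSet_Ioi (fun s hs => ?_)
      have hs0 : (0:ℝ) < s := hρ.trans hs
      rw [ENNReal.rpow_neg_one, ENNReal.ofReal_mul (hgnn s), mul_assoc,
        ENNReal.mul_inv_cancel (by simpa [ENNReal.ofReal_pos] using hs0) ENNReal.ofReal_ne_top,
        mul_one]
    have e1 : (∫⁻ s in Set.Ioi ρ, (ENNReal.ofReal (g s * s)) ^ (2:ℝ)) ≤
        ∫⁻ s in Set.Ioi (0:ℝ), ENNReal.ofReal (g s ^ 2 * s ^ 2) := by
      refine le_trans (le_of_eq (setLIntegral_congr_fun measurableSet_Ioi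
        (fun s hs => ?_))) (lintegral_mono_set (Set.Ioi_subset_Ioi hρ.le))
      have hs0 : (0:ℝ) < s := hρ.trans hs
      rw [ENNReal.ofReal_rpow_of_nonneg (mul_nonneg (hgnn s) hs0.le) (by norm_num),
        Real.rpow_two, mul_pow]
    have e2 : (∫⁻ s in Set.Ioi ρ, ((ENNReal.ofReal s) ^ (-1:ℝ)) ^ (2:ℝ)) =
        ENNReal.ofReal (-ρ ^ ((-2:ℝ)+1) / ((-2:ℝ)+1)) := by
      rw [← hT ρ hρ (-2) (by norm_num)]
      refine setLIntegral_congr_fun measurableSet_Ioi (fun s _ => ?_)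
      rw [← ENNReal.rpow_mul]
      norm_num
    refine lt_of_le_of_lt step (ENNReal.mul_lt_top ?_ ?_)
    · exact ENNReal.rpow_lt_top_of_nonneg (by norm_num) (lt_of_le_of_lt e1 hfin).ne
    · exact ENNReal.rpow_lt_top_of_nonneg (by norm_num) (by rw [e2]; exact ENNReal.ofReal_ne_top)
  have hgint : ∀ ρ : ℝ, 0 < ρ → IntegrableOn g (Set.Ioi ρ) := by
    intro ρ hρ
    refine ⟨hgmeas.aestronglyMeasurable.restrict, ?_⟩
    rw [hasFiniteIntegral_iff_ofReal (ae_of_all _ hgnn)]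
    exact hGfin ρ hρ
  -- pointwise bound on |f ρ|
  have hfρ : ∀ ρ : ℝ, 0 < ρ → |f ρ| ≤ ∫ s in Set.Ioi ρ, g s := by
    intro ρ hρ
    have hf'int : IntegrableOn f' (Set.Ioi ρ) := by
      have habs : IntegrableOn (fun s => |f' s|) (Set.Ioi ρ) := by
        refine (hgint ρ hρ).congr_fun (fun s hs => ?_) measurableSet_Ioi
        exact (hgeq s (hρ.trans hs)).symm
      have hmf' : AEStronglyMeasurable f' (volume.restrict (Set.Ioi ρ)) := by
        refine (measurable_deriv f).aestronglyMeasurable.congr ?_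
        refine (ae_restrict_iff' measurableSet_Ioi).mpr (ae_of_all _ fun s hs => ?_)
        exact (hderiv s (hρ.trans hs)).deriv
      refine ⟨hmf', (hasFiniteIntegral_norm_iff f').mp ?_⟩
      simpa [Real.norm_eq_abs] using habs.2
    have key : ∀ R, ρ ≤ R → |f ρ| ≤ |f R| + ∫ s in Set.Ioi ρ, g s := by
      intro R hR
      have hftc : ∫ y in ρ..R, f' y = f R - f ρ := by
        refine intervalIntegral.integral_eq_sub_of_hasDerivAt (fun x hx => ?_) ?_
        · rw [Set.uIcc_of_le hR] at hx
          exact hderiv x (lt_of_lt_of_le hρ hx.1)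
        · rw [intervalIntegrable_iff]
          exact hf'int.mono_set (fun x hx => by
            rw [Set.uIoc_of_le hR] at hx; exact hx.1)
      have hrepr : f ρ = f R - ∫ y in ρ..R, f' y := by rw [hftc]; ring
      have h2 : |∫ y in ρ..R, f' y| ≤ ∫ s in Set.Ioi ρ, g s := by
        calc |∫ y in ρ..R, f' y| ≤ ∫ y in ρ..R, |f' y| :=
              intervalIntegral.abs_integral_le_integral_abs hR
          _ = ∫ y in Set.Ioc ρ R, |f' y| := by rw [intervalIntegral.integral_of_le hR]
          _ = ∫ y in Set.Ioc ρ R, g y := by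
              refine setIntegral_congr_fun measurableSet_Ioc (fun y hy => ?_)
              exact hgeq y (hρ.trans hy.1)
          _ ≤ ∫ s in Set.Ioi ρ, g s := by
              refine setIntegral_mono_set (hgint ρ hρ) ?_ ?_
              · exact (ae_restrict_iff' measurableSet_Ioi).mpr (ae_of_all _ fun s _ => hgnn s)
              · exact ae_of_all _ (fun y hy => hy.1)
      calc |f ρ| = |f R - ∫ y in ρ..R, f' y| := by rw [← hrepr]
        _ ≤ |f R| + |∫ y in ρ..R, f' y| := by
            rw [sub_eq_add_neg]; exact (abs_add_le _ _).trans (by rw [abs_neg])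
        _ ≤ |f R| + ∫ s in Set.Ioi ρ, g s := by gcongr
    have htend : Tendsto (fun R => |f R| + ∫ s in Set.Ioi ρ, g s) atTop
        (nhds (∫ s in Set.Ioi ρ, g s)) := by
      have := hlim.abs.add (tendsto_const_nhds (x := ∫ s in Set.Ioi ρ, g s) (f := atTop))
      simpa using this
    exact ge_of_tendsto htend (eventually_atTop.mpr ⟨ρ, key⟩)
  -- step A : sup bound
  have hsup : ∀ t : ℝ, 0 < t →
      (⨆ (ρ : ℝ) (_ : t < ρ), ENNReal.ofReal |f ρ|) ≤
        ∫⁻ s in Set.Ioi t, ENNReal.ofReal (g s) := by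
    intro t ht
    refine iSup₂_le fun ρ hρ => ?_
    have hρ0 : 0 < ρ := ht.trans hρ
    calc ENNReal.ofReal |f ρ| ≤ ENNReal.ofReal (∫ s in Set.Ioi ρ, g s) :=
          ENNReal.ofReal_le_ofReal (hfρ ρ hρ0)
      _ = ∫⁻ s in Set.Ioi ρ, ENNReal.ofReal (g s) :=
          ofReal_integral_eq_lintegral_ofReal (hgint ρ hρ0) (ae_of_all _ hgnn)
      _ ≤ ∫⁻ s in Set.Ioi t, ENNReal.ofReal (g s) :=
          lintegral_mono_set (Set.Ioi_subset_Ioi hρ.le)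
  -- the Hardy weight functions
  set H : ℝ → ℝ≥0∞ := fun s => ENNReal.ofReal (g s ^ 2) * (ENNReal.ofReal s) ^ ((3:ℝ)/2)
    with hHdef
  set w : ℝ → ℝ≥0∞ := fun t => ENNReal.ofReal (2 * t ^ (-(1:ℝ)/2)) with hwdef
  have hHmeas : Measurable H :=
    (ENNReal.measurable_ofReal.comp (hgmeas.pow_const 2)).mul
      (ENNReal.measurable_ofReal.pow_const _)
  have hwmeas : Measurable w :=
    ENNReal.measurable_ofReal.comp (measurable_const.mul (measurable_id.pow_const _))
  have hHne : ∀ s, H s ≠ ⊤ := fun s =>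
    ENNReal.mul_ne_top ENNReal.ofReal_ne_top
      (ENNReal.rpow_ne_top_of_nonneg (by norm_num) ENNReal.ofReal_ne_top)
  -- step M1 : Cauchy-Schwarz with weight
  have hM1 : ∀ t : ℝ, 0 < t →
      (∫⁻ s in Set.Ioi t, ENNReal.ofReal (g s)) ^ 2 ≤ (∫⁻ s in Set.Ioi t, H s) * w t := by
    intro t ht
    have h1 : AEMeasurable (fun s => ENNReal.ofReal (g s) * (ENNReal.ofReal s) ^ ((3:ℝ)/4))
        (volume.restrict (Set.Ioi t)) :=
      ((ENNReal.measurable_ofReal.comp hgmeas).mul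
        (ENNReal.measurable_ofReal.pow_const _)).aemeasurable
    have h2 : AEMeasurable (fun s : ℝ => (ENNReal.ofReal s) ^ (-(3:ℝ)/4))
        (volume.restrict (Set.Ioi t)) :=
      (ENNReal.measurable_ofReal.pow_const _).aemeasurable
    have hsplit : (∫⁻ s in Set.Ioi t, ENNReal.ofReal (g s)) =
        ∫⁻ s in Set.Ioi t,
          (ENNReal.ofReal (g s) * (ENNReal.ofReal s) ^ ((3:ℝ)/4)) *
            (ENNReal.ofReal s) ^ (-(3:ℝ)/4) := by
      refine setLIntegral_congr_fun measurableSet_Ioi (fun s hs => ?_)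
      have hs0 : (0:ℝ) < s := ht.trans hs
      have hne : ENNReal.ofReal s ≠ 0 := by simpa [ENNReal.ofReal_pos] using hs0
      rw [mul_assoc, ← ENNReal.rpow_add _ _ hne ENNReal.ofReal_ne_top]
      norm_num
    have hCS := lint_CS h1 h2
    have e1 : (∫⁻ s in Set.Ioi t,
        (ENNReal.ofReal (g s) * (ENNReal.ofReal s) ^ ((3:ℝ)/4)) ^ (2:ℝ)) =
        ∫⁻ s in Set.Ioi t, H s := by
      refine setLIntegral_congr_fun measurableSet_Ioi (fun s hs => ?_)
      rw [ENNReal.mul_rpow_of_nonneg _ _ (by norm_num : (0:ℝ) ≤ 2),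
        ENNReal.ofReal_rpow_of_nonneg (hgnn s) (by norm_num), Real.rpow_two,
        ← ENNReal.rpow_mul, hHdef]
      norm_num
    have e2 : (∫⁻ s in Set.Ioi t, ((ENNReal.ofReal s) ^ (-(3:ℝ)/4)) ^ (2:ℝ)) = w t := by
      have : (∫⁻ s in Set.Ioi t, ((ENNReal.ofReal s) ^ (-(3:ℝ)/4)) ^ (2:ℝ)) =
          ∫⁻ s in Set.Ioi t, (ENNReal.ofReal s) ^ (-(3:ℝ)/2) := by
        refine setLIntegral_congr_fun measurableSet_Ioi (fun s _ => ?_)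
        rw [← ENNReal.rpow_mul]
        norm_num
      rw [this, hT t ht (-(3:ℝ)/2) (by norm_num), hwdef]
      norm_num
      rw [div_eq_mul_inv, ENNReal.ofReal_mul (Real.rpow_nonneg ht.le _), mul_comm]
      norm_num
    calc (∫⁻ s in Set.Ioi t, ENNReal.ofReal (g s)) ^ 2
        ≤ ((∫⁻ s in Set.Ioi t, H s) ^ ((1:ℝ)/2) * (w t) ^ ((1:ℝ)/2)) ^ 2 := by
          rw [hsplit]
          gcongr
          exact le_of_le_of_eq hCS (by rw [e1, e2])
      _ = (∫⁻ s in Set.Ioi t, H s) * w t := by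
          rw [mul_pow, sq_half, sq_half]
  -- the Fubini kernel
  set K : Set (ℝ × ℝ) := {p : ℝ × ℝ | 0 < p.1 ∧ p.1 < p.2} with hKdef
  have hKmeas : MeasurableSet K :=
    (measurableSet_lt measurable_const measurable_fst).inter
      (measurableSet_lt measurable_fst measurable_snd)
  set F : ℝ × ℝ → ℝ≥0∞ := K.indicator (fun q => H q.2 * w q.1) with hFdef
  have hFmeas : Measurable F :=
    ((hHmeas.comp measurable_snd).mul (hwmeas.comp measurable_fst)).indicator hKmeas
  have hswap : ∫⁻ t : ℝ, ∫⁻ s : ℝ, F (t, s) = ∫⁻ s : ℝ, ∫⁻ t : ℝ, F (t, s) := by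
    refine lintegral_lintegral_swap ?_
    have : Function.uncurry (fun t s : ℝ => F (t, s)) = F := by
      funext p; cases p; rfl
    rw [this]
    exact hFmeas.aemeasurable
  -- left identification
  have hleft : (∫⁻ t in Set.Ioi (0:ℝ), (∫⁻ s in Set.Ioi t, H s) * w t) =
      ∫⁻ t : ℝ, ∫⁻ s : ℝ, F (t, s) := by
    have hfun : (fun t => ∫⁻ s : ℝ, F (t, s)) =
        (Set.Ioi (0:ℝ)).indicator (fun t => (∫⁻ s in Set.Ioi t, H s) * w t) := by
      funext t
      by_cases ht : 0 < t
      · have : (fun s => F (t, s)) = (Set.Ioi t).indicator (fun s => H s * w t) := by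
          funext s
          by_cases hs : t < s
          · rw [hFdef]
            simp [Set.indicator_of_mem, hKdef, ht, hs, Set.mem_Ioi]
          · rw [hFdef]
            simp [Set.indicator_of_notMem, hKdef, hs, Set.mem_Ioi]
        rw [this, lintegral_indicator measurableSet_Ioi,
          lintegral_mul_const' _ _ (ENNReal.ofReal_ne_top),
          Set.indicator_of_mem (Set.mem_Ioi.mpr ht)]
      · have : (fun s => F (t, s)) = fun _ => 0 := by
          funext s
          rw [hFdef]
          exact Set.indicator_of_notMem (fun h => ht h.1) _
        rw [this, lintegral_zero, Set.indicator_of_notMem (by simpa using ht)]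
    rw [hfun, lintegral_indicator measurableSet_Ioi]
  -- right identification
  have hWint : ∀ s : ℝ, 0 < s →
      (∫⁻ t in Set.Ioo (0:ℝ) s, w t) = ENNReal.ofReal (4 * s ^ ((1:ℝ)/2)) := by
    intro s hs
    have hIoc : (∫⁻ t in Set.Ioo (0:ℝ) s, w t) = ∫⁻ t in Set.Ioc (0:ℝ) s, w t := by
      rw [Measure.restrict_congr_set Ioo_ae_eq_Ioc]
    have hint : IntegrableOn (fun t : ℝ => 2 * t ^ (-(1:ℝ)/2)) (Set.Ioc 0 s) := by
      have h1 : IntervalIntegrable (fun t : ℝ => t ^ (-(1:ℝ)/2)) volume 0 s :=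
        intervalIntegral.intervalIntegrable_rpow' (by norm_num)
      have h2 := (intervalIntegrable_iff.mp h1).const_mul 2
      rwa [Set.uIoc_of_le hs.le] at h2
    have hval : (∫ t in Set.Ioc (0:ℝ) s, 2 * t ^ (-(1:ℝ)/2)) = 4 * s ^ ((1:ℝ)/2) := by
      have : (∫ t in Set.Ioc (0:ℝ) s, 2 * t ^ (-(1:ℝ)/2)) =
          ∫ t in (0:ℝ)..s, 2 * t ^ (-(1:ℝ)/2) := by
        rw [intervalIntegral.integral_of_le hs.le]
      rw [this, intervalIntegral.integral_const_mul, integral_rpow (Or.inl (by norm_num))]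
      rw [Real.zero_rpow (by norm_num : (-(1:ℝ)/2 + 1) ≠ 0)]
      norm_num
      ring
    rw [hIoc, ← ofReal_integral_eq_lintegral_ofReal hint
      ((ae_restrict_iff' measurableSet_Ioc).mpr (ae_of_all _ fun t ht =>
        mul_nonneg (by norm_num) (Real.rpow_nonneg ht.1.le _))), hval]
  have hright : (∫⁻ s : ℝ, ∫⁻ t : ℝ, F (t, s)) =
      ∫⁻ s in Set.Ioi (0:ℝ), H s * ENNReal.ofReal (4 * s ^ ((1:ℝ)/2)) := by
    have hfun : (fun s => ∫⁻ t : ℝ, F (t, s)) =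
        (Set.Ioi (0:ℝ)).indicator (fun s => H s * ENNReal.ofReal (4 * s ^ ((1:ℝ)/2))) := by
      funext s
      have hFs : (fun t => F (t, s)) = (Set.Ioo (0:ℝ) s).indicator (fun t => H s * w t) := by
        funext t
        by_cases ht : t ∈ Set.Ioo (0:ℝ) s
        · rw [hFdef]
          simp [Set.indicator_of_mem, hKdef, ht.1, ht.2, Set.mem_Ioo]
        · rw [hFdef]
          rw [Set.mem_Ioo, not_and_or] at ht
          rcases ht with ht | ht
          · refine (Set.indicator_of_notMem (fun h => ht h.1) _).trans
              (Set.indicator_of_notMem (by rw [Set.mem_Ioo, not_and_or]; left; exact ht) _).symm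
          · refine (Set.indicator_of_notMem (fun h => ht h.2) _).trans
              (Set.indicator_of_notMem (by rw [Set.mem_Ioo, not_and_or]; right; exact ht) _).symm
      by_cases hs : 0 < s
      · rw [hFs, lintegral_indicator measurableSet_Ioo,
          lintegral_const_mul' _ _ (hHne s), hWint s hs,
          Set.indicator_of_mem (Set.mem_Ioi.mpr hs)]
      · rw [hFs, Set.Ioo_eq_empty (by simpa using (fun h : (0:ℝ) < s => hs h))]
        simp [Set.indicator_of_notMem, hs]
    rw [hfun, lintegral_indicator measurableSet_Ioi]
  -- final pointwise computation
  have hfinal : (∫⁻ s in Set.Ioi (0:ℝ), H s * ENNReal.ofReal (4 * s ^ ((1:ℝ)/2))) =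
      4 * ∫⁻ s in Set.Ioi (0:ℝ), ENNReal.ofReal (g s ^ 2 * s ^ 2) := by
    rw [← lintegral_const_mul' _ _ (by norm_num : (4:ℝ≥0∞) ≠ ⊤)]
    refine setLIntegral_congr_fun measurableSet_Ioi (fun s hs => ?_)
    have hs0 : (0:ℝ) < s := hs
    rw [hHdef]
    simp only
    rw [ENNReal.ofReal_rpow_of_pos hs0,
      ENNReal.ofReal_mul (by norm_num : (0:ℝ) ≤ 4), ENNReal.ofReal_mul (sq_nonneg (g s)),
      show ENNReal.ofReal (4:ℝ) = 4 by norm_num]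
    have hss : ENNReal.ofReal (s ^ ((3:ℝ)/2)) * ENNReal.ofReal (s ^ ((1:ℝ)/2)) =
        ENNReal.ofReal (s ^ 2) := by
      rw [← ENNReal.ofReal_mul (Real.rpow_nonneg hs0.le _), ← Real.rpow_add hs0]
      norm_num
    calc ENNReal.ofReal (g s ^ 2) * ENNReal.ofReal (s ^ ((3:ℝ)/2)) *
          (4 * ENNReal.ofReal (s ^ ((1:ℝ)/2)))
        = 4 * (ENNReal.ofReal (g s ^ 2) *
            (ENNReal.ofReal (s ^ ((3:ℝ)/2)) * ENNReal.ofReal (s ^ ((1:ℝ)/2)))) := by ring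
      _ = 4 * (ENNReal.ofReal (g s ^ 2) * ENNReal.ofReal (s ^ 2)) := by rw [hss]
  -- assemble
  calc (∫⁻ t in Set.Ioi (0:ℝ), (⨆ (ρ : ℝ) (_ : t < ρ), ENNReal.ofReal |f ρ|) ^ 2)
      ≤ ∫⁻ t in Set.Ioi (0:ℝ), (∫⁻ s in Set.Ioi t, ENNReal.ofReal (g s)) ^ 2 := by
        refine lintegral_mono_ae ((ae_restrict_iff' measurableSet_Ioi).mpr
          (ae_of_all _ fun t ht => ?_))
        gcongr
        exact hsup t ht
    _ ≤ ∫⁻ t in Set.Ioi (0:ℝ), (∫⁻ s in Set.Ioi t, H s) * w t := by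
        refine lintegral_mono_ae ((ae_restrict_iff' measurableSet_Ioi).mpr
          (ae_of_all _ fun t ht => ?_))
        exact hM1 t ht
    _ = ∫⁻ t : ℝ, ∫⁻ s : ℝ, F (t, s) := hleft
    _ = ∫⁻ s : ℝ, ∫⁻ t : ℝ, F (t, s) := hswap
    _ = ∫⁻ s in Set.Ioi (0:ℝ), H s * ENNReal.ofReal (4 * s ^ ((1:ℝ)/2)) := hright
    _ = 4 * ∫⁻ s in Set.Ioi (0:ℝ), ENNReal.ofReal (g s ^ 2 * s ^ 2) := hfinal
end
end

section
/- For every $h \in L^2_t L^1_\rho((0,\infty)\times(0,\infty))$ one has $\left\| \frac{1}{w} \iint_{\{(t,\rho):\, w > t\rho > 0\}} \frac{\rho}{1+\rho}\, h(t,\rho)\, d\rho\, dt \right\|_{L^2_w(0,\infty)} \le C\, \|h\|_{L^2_t L^1_\rho}$ for an absolute constant $C$. -/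
open MeasureTheory Filter Topology ENNReal Set

noncomputable section

def Kk (w t : ℝ) : ℝ≥0∞ := min (ENNReal.ofReal w)⁻¹ (ENNReal.ofReal t)⁻¹

lemma key_integral {w : ℝ} (hw : 0 < w) :
    ∫⁻ t in Ioi (0:ℝ), Kk w t * ENNReal.ofReal (t ^ (-(1/2):ℝ)) =
      4 * ENNReal.ofReal (w ^ (-(1/2):ℝ)) := by
  rw [← Ioc_union_Ioi_eq_Ioi hw.le,
    lintegral_union measurableSet_Ioi (Ioc_disjoint_Ioi le_rfl)]
  have h1 : ∫⁻ t in Ioc (0:ℝ) w, Kk w t * ENNReal.ofReal (t ^ (-(1/2):ℝ)) =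
      2 * ENNReal.ofReal (w ^ (-(1/2):ℝ)) := by
    rw [setLIntegral_congr_fun measurableSet_Ioc
      (fun t ht => show Kk w t * _ = (ENNReal.ofReal w)⁻¹ * ENNReal.ofReal (t ^ (-(1/2):ℝ)) by
        unfold Kk
        rw [min_eq_left (ENNReal.inv_le_inv.mpr (ENNReal.ofReal_le_ofReal ht.2))])]
    rw [lintegral_const_mul' _ _ (ENNReal.inv_ne_top.mpr (ENNReal.ofReal_pos.mpr hw).ne')]
    have hint : IntegrableOn (fun t : ℝ => t ^ (-(1/2):ℝ)) (Ioc 0 w) :=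
      (intervalIntegral.intervalIntegrable_rpow' (by norm_num)).1
    rw [← ofReal_integral_eq_lintegral_ofReal hint
      ((ae_restrict_iff' measurableSet_Ioc).mpr
        (ae_of_all _ fun t ht => Real.rpow_nonneg ht.1.le _))]
    have hval : ∫ t in Ioc (0:ℝ) w, t ^ (-(1/2):ℝ) = 2 * w ^ ((1/2):ℝ) := by
      rw [← intervalIntegral.integral_of_le hw.le,
        integral_rpow (Or.inl (by norm_num))]
      rw [Real.zero_rpow (by norm_num)]
      norm_num
      ring
    rw [hval, ← ENNReal.ofReal_inv_of_pos hw, ← ENNReal.ofReal_mul (by positivity)]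
    rw [show w⁻¹ * (2 * w ^ ((1/2):ℝ)) = 2 * (w ^ (-1:ℝ) * w ^ ((1/2):ℝ)) by
        rw [Real.rpow_neg_one]; ring,
      ← Real.rpow_add hw]
    norm_num
  have h2 : ∫⁻ t in Ioi w, Kk w t * ENNReal.ofReal (t ^ (-(1/2):ℝ)) =
      2 * ENNReal.ofReal (w ^ (-(1/2):ℝ)) := by
    rw [setLIntegral_congr_fun measurableSet_Ioi
      (fun t (ht : w < t) => show Kk w t * _ = ENNReal.ofReal (t ^ (-(3/2):ℝ)) by
        have ht0 : 0 < t := hw.trans ht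
        unfold Kk
        rw [min_eq_right (ENNReal.inv_le_inv.mpr (ENNReal.ofReal_le_ofReal ht.le)),
          ← ENNReal.ofReal_inv_of_pos ht0, ← ENNReal.ofReal_mul (by positivity),
          show t⁻¹ = t ^ (-1:ℝ) from (Real.rpow_neg_one t).symm, ← Real.rpow_add ht0]
        norm_num)]
    rw [← ofReal_integral_eq_lintegral_ofReal
      (integrableOn_Ioi_rpow_of_lt (by norm_num) hw)
      ((ae_restrict_iff' measurableSet_Ioi).mpr
        (ae_of_all _ fun t ht => Real.rpow_nonneg (hw.trans ht).le _))]
    rw [integral_Ioi_rpow_of_lt (by norm_num) hw]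
    norm_num
    rw [show w ^ (-(1/2):ℝ) / (1/2) = 2 * w ^ (-(1/2):ℝ) by ring,
      ENNReal.ofReal_mul (by norm_num), ENNReal.ofReal_ofNat]
  rw [h1, h2]
  ring

lemma Kk_pos {w t : ℝ} : 0 < Kk w t :=
  lt_min (ENNReal.inv_pos.mpr ENNReal.ofReal_ne_top) (ENNReal.inv_pos.mpr ENNReal.ofReal_ne_top)

lemma Kk_ne_top {w : ℝ} (hw : 0 < w) (t : ℝ) : Kk w t ≠ ⊤ := by
  refine ne_top_of_le_ne_top ?_ (min_le_left _ _)
  simpa [ENNReal.inv_ne_top] using (ENNReal.ofReal_pos.mpr hw).ne'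

lemma Kk_meas_right (w : ℝ) : Measurable (Kk w) :=
  measurable_const.min ENNReal.measurable_ofReal.inv

lemma sqrt_mul_self' {x : ℝ≥0∞} (h0 : x ≠ 0) (ht : x ≠ ⊤) :
    x ^ ((1:ℝ)/2) * x ^ ((1:ℝ)/2) = x := by
  rw [← ENNReal.rpow_add _ _ h0 ht]; norm_num

lemma sqrt_sq' {x : ℝ≥0∞} : (x ^ ((1:ℝ)/2)) ^ 2 = x := by
  rw [← ENNReal.rpow_natCast (x ^ ((1:ℝ)/2)) 2, ← ENNReal.rpow_mul]
  norm_num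

lemma cs_sq {α : Type*} [MeasurableSpace α] (μ : Measure α) (f g : α → ℝ≥0∞)
    (hf : AEMeasurable f μ) (hg : AEMeasurable g μ) :
    (∫⁻ x, f x * g x ∂μ) ^ 2 ≤ (∫⁻ x, (f x) ^ 2 ∂μ) * (∫⁻ x, (g x) ^ 2 ∂μ) := by
  have hpq : Real.HolderConjugate 2 2 := by
    rw [Real.holderConjugate_iff] <;> norm_num
  have h := ENNReal.lintegral_mul_le_Lp_mul_Lq μ hpq hf hg
  simp only [show ∀ x : ℝ≥0∞, x ^ (2:ℝ) = x ^ 2 from fun x => by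
    rw [← ENNReal.rpow_natCast x 2]; norm_num] at h
  calc (∫⁻ x, f x * g x ∂μ) ^ 2
      ≤ ((∫⁻ x, (f x) ^ 2 ∂μ) ^ ((1:ℝ)/2) * (∫⁻ x, (g x) ^ 2 ∂μ) ^ ((1:ℝ)/2)) ^ 2 := by
        exact pow_le_pow_left' h 2
    _ = (∫⁻ x, (f x) ^ 2 ∂μ) * (∫⁻ x, (g x) ^ 2 ∂μ) := by
        rw [mul_pow, sqrt_sq', sqrt_sq']

lemma schur_pointwise {w : ℝ} (hw : 0 < w) (F : ℝ → ℝ≥0∞) (hF : Measurable F) :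
    (∫⁻ t in Ioi (0:ℝ), Kk w t * F t) ^ 2 ≤
      4 * ENNReal.ofReal (w ^ (-(1/2):ℝ)) *
        ∫⁻ t in Ioi (0:ℝ), Kk w t * ENNReal.ofReal (t ^ ((1/2):ℝ)) * (F t) ^ 2 := by
  set a : ℝ → ℝ≥0∞ := fun t => (Kk w t) ^ ((1:ℝ)/2) * ENNReal.ofReal (t ^ (-(1/4):ℝ)) with ha
  set b : ℝ → ℝ≥0∞ := fun t => (Kk w t) ^ ((1:ℝ)/2) * ENNReal.ofReal (t ^ ((1/4):ℝ)) * F t with hb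
  have hKm : Measurable (Kk w) := Kk_meas_right w
  have hameas : Measurable a := by fun_prop
  have hbmeas : Measurable b := by fun_prop
  have h1 : ∫⁻ t in Ioi (0:ℝ), Kk w t * F t = ∫⁻ t in Ioi (0:ℝ), a t * b t := by
    refine setLIntegral_congr_fun measurableSet_Ioi fun t ht => ?_
    simp only [ha, hb]
    rw [show Kk w t ^ ((1:ℝ)/2) * ENNReal.ofReal (t ^ (-(1/4):ℝ)) *
        (Kk w t ^ ((1:ℝ)/2) * ENNReal.ofReal (t ^ ((1/4):ℝ)) * F t) =
        (Kk w t ^ ((1:ℝ)/2) * Kk w t ^ ((1:ℝ)/2)) *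
        (ENNReal.ofReal (t ^ (-(1/4):ℝ)) * ENNReal.ofReal (t ^ ((1/4):ℝ))) * F t by ring,
      sqrt_mul_self' Kk_pos.ne' (Kk_ne_top hw t),
      ← ENNReal.ofReal_mul (Real.rpow_nonneg (le_of_lt ht) _),
      ← Real.rpow_add ht]
    norm_num
  have h2 : ∫⁻ t in Ioi (0:ℝ), (a t) ^ 2 = 4 * ENNReal.ofReal (w ^ (-(1/2):ℝ)) := by
    rw [← key_integral hw]
    refine setLIntegral_congr_fun measurableSet_Ioi fun t ht => ?_
    simp only [ha]
    rw [mul_pow, sqrt_sq', ← ENNReal.ofReal_pow (Real.rpow_nonneg (le_of_lt ht) _),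
      ← Real.rpow_natCast (t ^ (-(1/4):ℝ)) 2, ← Real.rpow_mul (le_of_lt ht)]
    norm_num
  have h3 : ∫⁻ t in Ioi (0:ℝ), (b t) ^ 2 =
      ∫⁻ t in Ioi (0:ℝ), Kk w t * ENNReal.ofReal (t ^ ((1/2):ℝ)) * (F t) ^ 2 := by
    refine setLIntegral_congr_fun measurableSet_Ioi fun t ht => ?_
    simp only [hb]
    rw [mul_pow, mul_pow, sqrt_sq', ← ENNReal.ofReal_pow (Real.rpow_nonneg (le_of_lt ht) _),
      ← Real.rpow_natCast (t ^ ((1/4):ℝ)) 2, ← Real.rpow_mul (le_of_lt ht)]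
    norm_num
  rw [h1]
  calc (∫⁻ t in Ioi (0:ℝ), a t * b t) ^ 2
      ≤ (∫⁻ t in Ioi (0:ℝ), (a t) ^ 2) * (∫⁻ t in Ioi (0:ℝ), (b t) ^ 2) :=
        cs_sq _ _ _ hameas.aemeasurable hbmeas.aemeasurable
    _ = _ := by rw [h2, h3]

lemma ENN_mul_min (c a b : ℝ≥0∞) : c * min a b = min (c * a) (c * b) := by
  rcases le_total a b with h | h
  · rw [min_eq_left h, min_eq_left (mul_le_mul_right h c)]
  · rw [min_eq_right h, min_eq_right (mul_le_mul_right h c)]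

lemma meas_lint {f : ℝ × ℝ → ℝ≥0∞} (hf : Measurable f) :
    Measurable fun x : ℝ => ∫⁻ y in Ioi (0:ℝ), f (x, y) := by
  have key : ∀ x : ℝ, ∫⁻ y in Ioi (0:ℝ), f (x, y) =
      ∫⁻ y, f (x, y) * (Ioi (0:ℝ)).indicator 1 y := by
    intro x
    rw [← lintegral_indicator measurableSet_Ioi]
    refine lintegral_congr fun y => ?_
    by_cases hy : y ∈ Ioi (0:ℝ) <;> simp [Set.indicator_apply, hy]
  simp_rw [key]
  exact Measurable.lintegral_prod_right'
    (hf.mul ((measurable_one.indicator measurableSet_Ioi).comp measurable_snd))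

lemma stepA (h : ℝ → ℝ → ℝ) (hm : Measurable (Function.uncurry h)) {w : ℝ} (hw : 0 < w) :
    (ENNReal.ofReal w)⁻¹ * ∫⁻ p in {p : ℝ × ℝ | 0 < p.1 ∧ 0 < p.2 ∧ p.1 * p.2 < w},
        ENNReal.ofReal (p.2 / (1 + p.2) * |h p.1 p.2|) ≤
      ∫⁻ t in Ioi (0:ℝ), Kk w t * ∫⁻ ρ in Ioi (0:ℝ), ENNReal.ofReal |h t ρ| := by
  have habs : Measurable fun p : ℝ × ℝ => ENNReal.ofReal |h p.1 p.2| :=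
    ENNReal.measurable_ofReal.comp hm.abs
  set G : ℝ × ℝ → ℝ≥0∞ :=
    fun p => min 1 (ENNReal.ofReal (w / p.1)) * ENNReal.ofReal |h p.1 p.2| with hG
  have hGmeas : Measurable G :=
    (measurable_const.min
      (ENNReal.measurable_ofReal.comp (measurable_const.div measurable_fst))).mul habs
  have hWne : (ENNReal.ofReal w) ≠ 0 := (ENNReal.ofReal_pos.mpr hw).ne'
  have hWtop : (ENNReal.ofReal w)⁻¹ ≠ ⊤ := by simpa [ENNReal.inv_ne_top] using hWne
  have step1 : ∫⁻ p in {p : ℝ × ℝ | 0 < p.1 ∧ 0 < p.2 ∧ p.1 * p.2 < w},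
      ENNReal.ofReal (p.2 / (1 + p.2) * |h p.1 p.2|) ≤
      ∫⁻ t in Ioi (0:ℝ), min 1 (ENNReal.ofReal (w / t)) * ∫⁻ ρ in Ioi (0:ℝ),
        ENNReal.ofReal |h t ρ| := by
    calc ∫⁻ p in {p : ℝ × ℝ | 0 < p.1 ∧ 0 < p.2 ∧ p.1 * p.2 < w},
        ENNReal.ofReal (p.2 / (1 + p.2) * |h p.1 p.2|)
        ≤ ∫⁻ p in {p : ℝ × ℝ | 0 < p.1 ∧ 0 < p.2 ∧ p.1 * p.2 < w}, G p := by
          refine setLIntegral_mono hGmeas fun p hp => ?_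
          obtain ⟨ht, hρ, hlt⟩ := hp
          rw [ENNReal.ofReal_mul (div_nonneg hρ.le (by linarith))]
          refine mul_le_mul_left (le_min ?_ ?_) _
          · simpa using ENNReal.ofReal_le_one.mpr ((div_le_one (by linarith)).mpr (by linarith))
          · refine ENNReal.ofReal_le_ofReal ?_
            refine (div_le_self hρ.le (by linarith)).trans ?_
            exact le_of_lt ((lt_div_iff₀ ht).mpr (by rw [mul_comm]; exact hlt))
      _ ≤ ∫⁻ p in (Ioi (0:ℝ)) ×ˢ (Ioi (0:ℝ)), G p :=
          lintegral_mono_set fun p hp => ⟨hp.1, hp.2.1⟩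
      _ = ∫⁻ t in Ioi (0:ℝ), ∫⁻ ρ in Ioi (0:ℝ), G (t, ρ) := by
          rw [Measure.volume_eq_prod, ← Measure.prod_restrict,
            lintegral_prod _ hGmeas.aemeasurable]
      _ = ∫⁻ t in Ioi (0:ℝ), min 1 (ENNReal.ofReal (w / t)) * ∫⁻ ρ in Ioi (0:ℝ),
            ENNReal.ofReal |h t ρ| := by
          refine lintegral_congr fun t => ?_
          simp only [hG]
          exact lintegral_const_mul' _ _
            (((min_le_left _ _).trans_lt ENNReal.one_lt_top).ne)
  calc (ENNReal.ofReal w)⁻¹ * ∫⁻ p in {p : ℝ × ℝ | 0 < p.1 ∧ 0 < p.2 ∧ p.1 * p.2 < w},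
        ENNReal.ofReal (p.2 / (1 + p.2) * |h p.1 p.2|)
      ≤ (ENNReal.ofReal w)⁻¹ * ∫⁻ t in Ioi (0:ℝ), min 1 (ENNReal.ofReal (w / t)) *
          ∫⁻ ρ in Ioi (0:ℝ), ENNReal.ofReal |h t ρ| := mul_le_mul_right step1 _
    _ = ∫⁻ t in Ioi (0:ℝ), (ENNReal.ofReal w)⁻¹ * (min 1 (ENNReal.ofReal (w / t)) *
          ∫⁻ ρ in Ioi (0:ℝ), ENNReal.ofReal |h t ρ|) :=
        (lintegral_const_mul' _ _ hWtop).symm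
    _ = ∫⁻ t in Ioi (0:ℝ), Kk w t * ∫⁻ ρ in Ioi (0:ℝ), ENNReal.ofReal |h t ρ| := by
        refine setLIntegral_congr_fun measurableSet_Ioi fun t ht => ?_
        rw [← mul_assoc]
        congr 1
        rw [ENN_mul_min, mul_one, Kk]
        congr 1
        rw [div_eq_mul_inv, ENNReal.ofReal_mul hw.le, ← mul_assoc,
          ENNReal.inv_mul_cancel hWne ENNReal.ofReal_ne_top, one_mul,
          ENNReal.ofReal_inv_of_pos ht]

lemma Kk_symm (w t : ℝ) : Kk w t = Kk t w := min_comm _ _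

lemma Kk_meas : Measurable (Function.uncurry Kk) :=
  ((ENNReal.measurable_ofReal.comp measurable_fst).inv).min
    ((ENNReal.measurable_ofReal.comp measurable_snd).inv)

/-- Dual estimate with the weight `ρ/(1+ρ)` on the hyperbolic region `{w > tρ > 0}`:
`‖w⁻¹ ∬_{w>tρ>0} ρ/(1+ρ) h(t,ρ) dρ dt‖_{L²_w(0,∞)} ≤ C ‖h‖_{L²_t L¹_ρ}`
(stated in squared form). -/
theorem dual_bound_hyperbolic_region :
    ∃ C : ℝ≥0∞, 0 < C ∧ C < ⊤ ∧
      ∀ h : ℝ → ℝ → ℝ, Measurable (Function.uncurry h) →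
        (∫⁻ w in Set.Ioi (0:ℝ),
            ((ENNReal.ofReal w)⁻¹ *
              ∫⁻ p in {p : ℝ × ℝ | 0 < p.1 ∧ 0 < p.2 ∧ p.1 * p.2 < w},
                ENNReal.ofReal (p.2 / (1 + p.2) * |h p.1 p.2|))^2) ≤
          C * ∫⁻ t in Set.Ioi (0:ℝ),
              (∫⁻ ρ in Set.Ioi (0:ℝ), ENNReal.ofReal |h t ρ|)^2 := by
  refine ⟨16, by norm_num, by norm_num, fun h hm => ?_⟩
  set F : ℝ → ℝ≥0∞ := fun t => ∫⁻ ρ in Ioi (0:ℝ), ENNReal.ofReal |h t ρ| with hFdef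
  have habs : Measurable fun p : ℝ × ℝ => ENNReal.ofReal |h p.1 p.2| :=
    ENNReal.measurable_ofReal.comp hm.abs
  have hFm : Measurable F := meas_lint habs
  have h1meas : Measurable fun w : ℝ => ∫⁻ t in Ioi (0:ℝ), Kk w t * F t :=
    meas_lint (Kk_meas.mul (hFm.comp measurable_snd))
  have hinner : Measurable fun p : ℝ × ℝ =>
      Kk p.1 p.2 * ENNReal.ofReal (p.2 ^ ((1/2):ℝ)) * (F p.2) ^ 2 := by
    refine (Kk_meas.mul ?_).mul (((hFm.comp measurable_snd)).pow_const 2)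
    exact ENNReal.measurable_ofReal.comp ((measurable_snd.pow_const _).comp measurable_id)
  have h2meas : Measurable fun w : ℝ => 4 * ENNReal.ofReal (w ^ (-(1/2):ℝ)) *
      ∫⁻ t in Ioi (0:ℝ), Kk w t * ENNReal.ofReal (t ^ ((1/2):ℝ)) * (F t) ^ 2 := by
    refine Measurable.mul (by fun_prop) (meas_lint hinner)
  have hHmeas : Measurable fun z : ℝ × ℝ =>
      4 * ENNReal.ofReal (z.1 ^ (-(1/2):ℝ)) *
        (Kk z.1 z.2 * ENNReal.ofReal (z.2 ^ ((1/2):ℝ)) * (F z.2) ^ 2) := by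
    refine Measurable.mul ?_ hinner
    fun_prop
  calc ∫⁻ w in Ioi (0:ℝ),
        ((ENNReal.ofReal w)⁻¹ *
          ∫⁻ p in {p : ℝ × ℝ | 0 < p.1 ∧ 0 < p.2 ∧ p.1 * p.2 < w},
            ENNReal.ofReal (p.2 / (1 + p.2) * |h p.1 p.2|)) ^ 2
      ≤ ∫⁻ w in Ioi (0:ℝ), (∫⁻ t in Ioi (0:ℝ), Kk w t * F t) ^ 2 :=
        setLIntegral_mono (h1meas.pow_const 2)
          (fun w hw => pow_le_pow_left' (stepA h hm hw) 2)
    _ ≤ ∫⁻ w in Ioi (0:ℝ), 4 * ENNReal.ofReal (w ^ (-(1/2):ℝ)) *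
          ∫⁻ t in Ioi (0:ℝ), Kk w t * ENNReal.ofReal (t ^ ((1/2):ℝ)) * (F t) ^ 2 :=
        setLIntegral_mono h2meas (fun w hw => schur_pointwise hw F hFm)
    _ = ∫⁻ w in Ioi (0:ℝ), ∫⁻ t in Ioi (0:ℝ),
          4 * ENNReal.ofReal (w ^ (-(1/2):ℝ)) *
            (Kk w t * ENNReal.ofReal (t ^ ((1/2):ℝ)) * (F t) ^ 2) :=
        lintegral_congr fun w => (lintegral_const_mul' _ _
          (ENNReal.mul_ne_top (by simp) ENNReal.ofReal_ne_top)).symm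
    _ = ∫⁻ t in Ioi (0:ℝ), ∫⁻ w in Ioi (0:ℝ),
          4 * ENNReal.ofReal (w ^ (-(1/2):ℝ)) *
            (Kk w t * ENNReal.ofReal (t ^ ((1/2):ℝ)) * (F t) ^ 2) :=
        lintegral_lintegral_swap hHmeas.aemeasurable
    _ = ∫⁻ t in Ioi (0:ℝ), 16 * (F t) ^ 2 := by
        refine setLIntegral_congr_fun measurableSet_Ioi fun t ht => ?_
        have hrw : ∀ w : ℝ, 4 * ENNReal.ofReal (w ^ (-(1/2):ℝ)) *
            (Kk w t * ENNReal.ofReal (t ^ ((1/2):ℝ)) * (F t) ^ 2) =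
            (4 * ENNReal.ofReal (t ^ ((1/2):ℝ)) * (F t) ^ 2) *
              (Kk t w * ENNReal.ofReal (w ^ (-(1/2):ℝ))) := by
          intro w; rw [Kk_symm t w]; ring
        simp_rw [hrw]
        rw [lintegral_const_mul _ (f := fun w => Kk t w * ENNReal.ofReal (w ^ (-(1/2):ℝ))) ((Kk_meas_right t).mul (by fun_prop)),
          key_integral ht,
          show 4 * ENNReal.ofReal (t ^ ((1/2):ℝ)) * (F t) ^ 2 *
              (4 * ENNReal.ofReal (t ^ (-(1/2):ℝ))) =
            16 * (ENNReal.ofReal (t ^ ((1/2):ℝ)) * ENNReal.ofReal (t ^ (-(1/2):ℝ))) *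
              (F t) ^ 2 by ring,
          ← ENNReal.ofReal_mul (Real.rpow_nonneg (le_of_lt ht) _),
          ← Real.rpow_add ht]
        norm_num
    _ = 16 * ∫⁻ t in Ioi (0:ℝ), (F t) ^ 2 := lintegral_const_mul' _ _ (by simp)
end
end

section
/- Let $f \in \dot H^1_{rad}(\mathbb{R}^3)$ be radial (identified with $f(\rho)$, $\rho = |x|$, smooth for simplicity) and for $t, r > 0$ set $v(t,r) = \frac{1}{r}\left[ f(r+t)(r+t) - f(|r-t|)(t-r) \right]$ (the radial solution of the free wave equation with data $(f,0)$). Then $\|\sup_{r>0}|v(t,r)|\|_{L^2_t(0,\infty)} \le C \|\nabla f\|_{L^2(\mathbb{R}^3)}$ for an absolute constant $C$. -/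
open MeasureTheory Filter Topology ENNReal

noncomputable section

namespace RadialWave

open Set


lemma sq_eq_lintegral_indicator (a : ℝ≥0∞) :
    a ^ 2 = ∫⁻ l in Ioi (0:ℝ),
      ENNReal.ofReal (2 * l) * {l' : ℝ | ENNReal.ofReal l' < a}.indicator (fun _ => 1) l := by
  rcases eq_or_ne a ⊤ with rfl | ha
  · rw [eq_comm]
    simp only [ENNReal.ofReal_lt_top, setOf_true, indicator_univ, mul_one]
    rw [ENNReal.top_pow (by norm_num), eq_top_iff]
    calc (⊤ : ℝ≥0∞) = ∫⁻ l in Ioi (1:ℝ), 1 := by rw [setLIntegral_one, Real.volume_Ioi]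
    _ ≤ ∫⁻ l in Ioi (1:ℝ), ENNReal.ofReal (2 * l) := by
        refine setLIntegral_mono (by fun_prop) (fun l hl => ?_)
        simp only [mem_Ioi] at hl
        rw [show (1:ℝ≥0∞) = ENNReal.ofReal 1 by simp]
        exact ENNReal.ofReal_le_ofReal (by linarith)
    _ ≤ ∫⁻ l in Ioi (0:ℝ), ENNReal.ofReal (2 * l) := by
        exact lintegral_mono_set (Ioi_subset_Ioi (by norm_num))
  · set b := a.toReal with hb
    have hb0 : 0 ≤ b := ENNReal.toReal_nonneg
    have : ∀ l ∈ Ioi (0:ℝ),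
        ENNReal.ofReal (2 * l) * {l' : ℝ | ENNReal.ofReal l' < a}.indicator (fun _ => 1) l
          = (Ioo (0:ℝ) b).indicator (fun l => ENNReal.ofReal (2 * l)) l := by
      intro l hl
      simp only [mem_Ioi] at hl
      simp only [Set.indicator_apply, mem_setOf_eq, mem_Ioo]
      by_cases h : ENNReal.ofReal l < a
      · rw [if_pos h, if_pos ⟨hl, (ENNReal.ofReal_lt_iff_lt_toReal hl.le ha).1 h⟩, mul_one]
      · rw [if_neg h, if_neg, mul_zero]
        intro hmem
        exact h ((ENNReal.ofReal_lt_iff_lt_toReal hl.le ha).2 hmem.2)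
    rw [setLIntegral_congr_fun measurableSet_Ioi this]
    rw [lintegral_indicator measurableSet_Ioo, Measure.restrict_restrict measurableSet_Ioo,
      inter_eq_left.2 (fun x hx => hx.1)]
    have hint : IntegrableOn (fun l : ℝ => 2 * l) (Ioo 0 b) :=
      (continuous_const.mul continuous_id).integrableOn_Icc.mono_set Ioo_subset_Icc_self
    rw [← ofReal_integral_eq_lintegral_ofReal hint
      (Filter.Eventually.mono (ae_restrict_mem measurableSet_Ioo) (fun x hx => by simp only [Pi.zero_apply]; linarith [hx.1]))]
    have : ∫ l in Ioo (0:ℝ) b, 2 * l = b ^ 2 := by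
      rw [← integral_Ioc_eq_integral_Ioo, ← intervalIntegral.integral_of_le hb0]
      rw [intervalIntegral.integral_const_mul, integral_id]
      ring
    rw [this, ← ENNReal.ofReal_toReal ha, ← hb, ENNReal.ofReal_pow hb0]
lemma layercake_sq {g : ℝ → ℝ≥0∞} (hg : Measurable g) :
    ∫⁻ x, (g x) ^ 2 =
      ∫⁻ l in Ioi (0:ℝ), ENNReal.ofReal (2 * l) * volume {x | ENNReal.ofReal l < g x} := by
  have hS : MeasurableSet {p : ℝ × ℝ | ENNReal.ofReal p.2 < g p.1} :=
    measurableSet_lt (ENNReal.measurable_ofReal.comp measurable_snd) (hg.comp measurable_fst)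
  have hjm : Measurable (fun p : ℝ × ℝ =>
      ENNReal.ofReal (2 * p.2) * {p : ℝ × ℝ | ENNReal.ofReal p.2 < g p.1}.indicator (fun _ => 1) p) := by
    exact ((ENNReal.measurable_ofReal.comp ((measurable_const.mul measurable_snd))).mul
      (measurable_const.indicator hS))
  calc ∫⁻ x, (g x) ^ 2
      = ∫⁻ x, ∫⁻ l in Ioi (0:ℝ), ENNReal.ofReal (2 * l) *
          {p : ℝ × ℝ | ENNReal.ofReal p.2 < g p.1}.indicator (fun _ => 1) (x, l) := by
        refine lintegral_congr fun x => ?_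
        rw [sq_eq_lintegral_indicator (g x)]
        refine setLIntegral_congr_fun measurableSet_Ioi (fun l _ => ?_)
        simp only [indicator_apply, mem_setOf_eq]
    _ = ∫⁻ l in Ioi (0:ℝ), ∫⁻ x, ENNReal.ofReal (2 * l) *
          {p : ℝ × ℝ | ENNReal.ofReal p.2 < g p.1}.indicator (fun _ => 1) (x, l) := by
        exact lintegral_lintegral_swap hjm.aemeasurable
    _ = ∫⁻ l in Ioi (0:ℝ), ENNReal.ofReal (2 * l) * volume {x | ENNReal.ofReal l < g x} := by
        refine setLIntegral_congr_fun measurableSet_Ioi (fun l _ => ?_)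
        have h1 : ∀ x : ℝ, {p : ℝ × ℝ | ENNReal.ofReal p.2 < g p.1}.indicator (fun _ => (1:ℝ≥0∞)) (x, l)
            = {x : ℝ | ENNReal.ofReal l < g x}.indicator (fun _ => 1) x := by
          intro x; simp only [indicator_apply, mem_setOf_eq]
        simp_rw [h1]
        rw [lintegral_const_mul _ (measurable_const.indicator (measurableSet_lt measurable_const hg)),
          lintegral_indicator (measurableSet_lt measurable_const hg), setLIntegral_one]


def mavg (w : ℝ → ℝ≥0∞) (t r : ℝ) : ℝ≥0∞ :=
  (ENNReal.ofReal (2 * r))⁻¹ * ∫⁻ σ in Ioo (t - r) (t + r), w σ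

def maxfn (w : ℝ → ℝ≥0∞) (t : ℝ) : ℝ≥0∞ := ⨆ (r : ℝ) (_ : 0 < r), mavg w t r

lemma measurable_mavg {w : ℝ → ℝ≥0∞} (hw : Measurable w) (r : ℝ) :
    Measurable fun t => mavg w t r := by
  refine Measurable.const_mul ?_ _
  have : ∀ t : ℝ, (∫⁻ σ in Ioo (t - r) (t + r), w σ) =
      ∫⁻ σ, {p : ℝ × ℝ | p.1 - r < p.2 ∧ p.2 < p.1 + r}.indicator (fun p => w p.2) (t, σ) := by
    intro t
    rw [← lintegral_indicator measurableSet_Ioo]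
    refine lintegral_congr fun σ => ?_
    simp only [indicator_apply, mem_Ioo, mem_setOf_eq]
  simp_rw [this]
  refine Measurable.lintegral_prod_right' ?_
  refine Measurable.indicator (hw.comp measurable_snd) ?_
  exact MeasurableSet.inter
    (measurableSet_lt ((measurable_fst).sub measurable_const) measurable_snd)
    (measurableSet_lt measurable_snd ((measurable_fst).add measurable_const))

lemma mavg_le_rat (w : ℝ → ℝ≥0∞) (t : ℝ) {r : ℝ} (hr : 0 < r) :
    mavg w t r ≤ ⨆ (q : ℚ) (_ : 0 < (q:ℝ)), mavg w t q := by
  set μ' := volume.withDensity w with hμ'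
  have hap : ∀ s : ℝ, 0 < s → mavg w t s = (ENNReal.ofReal (2 * s))⁻¹ * μ' (Ioo (t - s) (t + s)) := by
    intro s _
    rw [mavg, withDensity_apply _ measurableSet_Ioo]
  have key : Ioo (t - r) (t + r) =
      ⋃ q : {q : ℚ // 0 < (q:ℝ) ∧ (q:ℝ) < r}, Ioo (t - (q:ℝ)) (t + (q:ℝ)) := by
    ext σ
    simp only [mem_Ioo, mem_iUnion]
    constructor
    · rintro ⟨h1, h2⟩
      obtain ⟨q, hq1, hq2⟩ := exists_rat_btwn (show max |σ - t| 0 < r by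
        rw [max_lt_iff]; exact ⟨abs_lt.2 ⟨by linarith, by linarith⟩, hr⟩)
      have h0 : (0:ℝ) < q := lt_of_le_of_lt (le_max_right _ _) hq1
      have habs : |σ - t| < q := lt_of_le_of_lt (le_max_left _ _) hq1
      rw [abs_lt] at habs
      exact ⟨⟨q, h0, hq2⟩, by linarith [habs.1], by linarith [habs.2]⟩
    · rintro ⟨⟨q, hq0, hqr⟩, h1, h2⟩
      simp only at h1 h2
      constructor <;> linarith
  have hdir : Directed (· ⊆ ·)
      (fun q : {q : ℚ // 0 < (q:ℝ) ∧ (q:ℝ) < r} => Ioo (t - (q:ℝ)) (t + (q:ℝ))) := by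
    intro a b
    rcases le_total (a:ℚ) b with h | h
    · have h' : (a:ℝ) ≤ (b:ℝ) := by exact_mod_cast h
      exact ⟨b, Ioo_subset_Ioo (by linarith) (by linarith), subset_rfl⟩
    · have h' : (b:ℝ) ≤ (a:ℝ) := by exact_mod_cast h
      exact ⟨a, subset_rfl, Ioo_subset_Ioo (by linarith) (by linarith)⟩
  calc mavg w t r = (ENNReal.ofReal (2 * r))⁻¹ * μ' (Ioo (t - r) (t + r)) := hap r hr
    _ = (ENNReal.ofReal (2 * r))⁻¹ * ⨆ q : {q : ℚ // 0 < (q:ℝ) ∧ (q:ℝ) < r},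
          μ' (Ioo (t - (q:ℝ)) (t + (q:ℝ))) := by rw [key, hdir.measure_iUnion]
    _ = ⨆ q : {q : ℚ // 0 < (q:ℝ) ∧ (q:ℝ) < r},
          (ENNReal.ofReal (2 * r))⁻¹ * μ' (Ioo (t - (q:ℝ)) (t + (q:ℝ))) := by rw [ENNReal.mul_iSup]
    _ ≤ ⨆ q : {q : ℚ // 0 < (q:ℝ) ∧ (q:ℝ) < r}, mavg w t (q:ℝ) := by
        refine iSup_mono fun q => ?_
        rw [hap _ q.2.1]
        refine mul_le_mul' ?_ le_rfl
        exact ENNReal.inv_le_inv.2 (ENNReal.ofReal_le_ofReal (by linarith [q.2.2]))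
    _ ≤ ⨆ (q : ℚ) (_ : 0 < (q:ℝ)), mavg w t q := by
        refine iSup_le fun q => ?_
        exact le_iSup_of_le q.1 (le_iSup_of_le q.2.1 le_rfl)

lemma maxfn_eq_rat (w : ℝ → ℝ≥0∞) (t : ℝ) :
    maxfn w t = ⨆ (q : ℚ) (_ : 0 < (q:ℝ)), mavg w t q := by
  refine le_antisymm ?_ ?_
  · exact iSup₂_le fun r hr => mavg_le_rat w t hr
  · exact iSup₂_le fun q hq => le_iSup₂ (α := ℝ≥0∞) (q:ℝ) hq

lemma measurable_maxfn {w : ℝ → ℝ≥0∞} (hw : Measurable w) : Measurable (maxfn w) := by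
  have : maxfn w = fun t => ⨆ (q : ℚ) (_ : 0 < (q:ℝ)), mavg w t q := funext (maxfn_eq_rat w)
  rw [this]
  exact Measurable.iSup fun q => Measurable.iSup fun _ => measurable_mavg hw _
lemma weak_type {w : ℝ → ℝ≥0∞} (hw : Measurable w) {l : ℝ} (hl : 0 < l) :
    volume {t | ENNReal.ofReal l < maxfn w t} ≤ 4 * (ENNReal.ofReal l)⁻¹ * ∫⁻ σ, w σ := by
  have hl0 : ENNReal.ofReal l ≠ 0 := by simp [ENNReal.ofReal_eq_zero]; linarith
  have hlt : ENNReal.ofReal l ≠ ⊤ := ENNReal.ofReal_ne_top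
  set I := ∫⁻ σ, w σ with hIdef
  rcases eq_or_ne I ⊤ with hI | hI
  · rw [hI, ENNReal.mul_top]
    · exact le_top
    · simp [ENNReal.inv_eq_zero, hlt]
  set μ' := volume.withDensity w with hμ'
  have hμ'univ : μ' univ = I := by
    rw [hμ', withDensity_apply _ MeasurableSet.univ, Measure.restrict_univ]
  set S := {t | ENNReal.ofReal l < maxfn w t} with hS
  have hch : ∀ t ∈ S, ∃ r : ℝ, 0 < r ∧
      ENNReal.ofReal l * ENNReal.ofReal (2 * r) < μ' (Ioo (t - r) (t + r)) := by
    intro t ht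
    rw [hS, mem_setOf_eq, maxfn, lt_iSup_iff] at ht
    obtain ⟨r, hlt'⟩ := ht
    rw [lt_iSup_iff] at hlt'
    obtain ⟨hr, hlt'⟩ := hlt'
    refine ⟨r, hr, ?_⟩
    rw [mavg, ← ENNReal.div_eq_inv_mul] at hlt'
    have := ENNReal.mul_lt_of_lt_div hlt'
    rwa [hμ', withDensity_apply _ measurableSet_Ioo]
  set ρ : ℝ → ℝ := fun t => if h : t ∈ S then (hch t h).choose else 0 with hρ
  have hρpos : ∀ t ∈ S, 0 < ρ t := by
    intro t ht; rw [hρ]; simp only [ht, dif_pos]; exact (hch t ht).choose_spec.1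
  have hρlt : ∀ t ∈ S, ENNReal.ofReal l * ENNReal.ofReal (2 * ρ t) <
      μ' (Ioo (t - ρ t) (t + ρ t)) := by
    intro t ht; rw [hρ]; simp only [ht, dif_pos]; exact (hch t ht).choose_spec.2
  set J := (ENNReal.ofReal l)⁻¹ * I with hJ
  have hJt : J ≠ ⊤ := ENNReal.mul_ne_top (by simp [hl0]) hI
  have hbound : ∀ t ∈ S, ENNReal.ofReal (2 * ρ t) ≤ J := by
    intro t ht
    have h1 : ENNReal.ofReal l * ENNReal.ofReal (2 * ρ t) ≤ I :=
      le_trans (hρlt t ht).le (le_trans (measure_mono (subset_univ _)) hμ'univ.le)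
    calc ENNReal.ofReal (2 * ρ t)
        = (ENNReal.ofReal l)⁻¹ * (ENNReal.ofReal l * ENNReal.ofReal (2 * ρ t)) := by
          rw [← mul_assoc, ENNReal.inv_mul_cancel hl0 hlt, one_mul]
      _ ≤ J := by rw [hJ]; exact mul_le_mul' le_rfl h1
  have hρR : ∀ t ∈ S, ρ t ≤ J.toReal := by
    intro t ht
    have h2 : 2 * ρ t ≤ J.toReal := by
      have := hbound t ht
      rw [← ENNReal.ofReal_toReal hJt] at this
      exact (ENNReal.ofReal_le_ofReal_iff ENNReal.toReal_nonneg).1 this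
    linarith [hρpos t ht]
  obtain ⟨u, huS, hdisj, hcov⟩ :=
    Vitali.exists_disjoint_subfamily_covering_enlargement_closedBall S id ρ J.toReal hρR 4
      (by norm_num)
  simp only [id] at hdisj hcov
  have hcnt : u.Countable := by
    refine hdisj.countable_of_nonempty_interior fun a ha => ?_
    exact ⟨a, Metric.ball_subset_interior_closedBall (Metric.mem_ball_self (hρpos a (huS ha)))⟩
  have hScov : S ⊆ ⋃ b ∈ u, Metric.closedBall b (4 * ρ b) := by
    intro a ha
    obtain ⟨b, hb, hsub⟩ := hcov a ha
    exact mem_biUnion hb (hsub (Metric.mem_closedBall_self (hρpos a ha).le))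
  have hdisj' : u.PairwiseDisjoint fun b => Ioo (b - ρ b) (b + ρ b) := by
    refine hdisj.mono fun b => ?_
    beta_reduce
    rw [Real.closedBall_eq_Icc]
    exact Ioo_subset_Icc_self
  calc volume S ≤ volume (⋃ b ∈ u, Metric.closedBall b (4 * ρ b)) := measure_mono hScov
    _ ≤ ∑' b : u, volume (Metric.closedBall (b:ℝ) (4 * ρ b)) := measure_biUnion_le volume hcnt _
    _ = ∑' b : u, 4 * ENNReal.ofReal (2 * ρ b) := by
        refine tsum_congr fun b => ?_
        rw [Real.volume_closedBall, show 2 * (4 * ρ (b:ℝ)) = 4 * (2 * ρ (b:ℝ)) by ring,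
          ENNReal.ofReal_mul (by norm_num)]
        norm_num
    _ ≤ ∑' b : u, 4 * ((ENNReal.ofReal l)⁻¹ * μ' (Ioo ((b:ℝ) - ρ b) ((b:ℝ) + ρ b))) := by
        refine ENNReal.tsum_le_tsum fun b => mul_le_mul' le_rfl ?_
        have h1 := (hρlt (b:ℝ) (huS b.2)).le
        calc ENNReal.ofReal (2 * ρ (b:ℝ))
            = (ENNReal.ofReal l)⁻¹ * (ENNReal.ofReal l * ENNReal.ofReal (2 * ρ (b:ℝ))) := by
              rw [← mul_assoc, ENNReal.inv_mul_cancel hl0 hlt, one_mul]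
          _ ≤ _ := mul_le_mul' le_rfl h1
    _ = 4 * (ENNReal.ofReal l)⁻¹ * ∑' b : u, μ' (Ioo ((b:ℝ) - ρ b) ((b:ℝ) + ρ b)) := by
        rw [ENNReal.tsum_mul_left, ENNReal.tsum_mul_left, ← mul_assoc]
    _ ≤ 4 * (ENNReal.ofReal l)⁻¹ * I := by
        refine mul_le_mul' le_rfl ?_
        rw [← measure_biUnion hcnt hdisj' fun b _ => measurableSet_Ioo]
        exact le_trans (measure_mono (subset_univ _)) hμ'univ.le
lemma lintegral_indicator_lt (c : ℝ≥0∞) :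
    ∫⁻ l in Ioi (0:ℝ), {l' : ℝ | ENNReal.ofReal l' < c}.indicator (fun _ => (1:ℝ≥0∞)) l = c := by
  rcases eq_or_ne c ⊤ with rfl | hc
  · simp only [ENNReal.ofReal_lt_top, setOf_true, indicator_univ]
    rw [setLIntegral_one, Real.volume_Ioi]
  · have : ∀ l ∈ Ioi (0:ℝ), {l' : ℝ | ENNReal.ofReal l' < c}.indicator (fun _ => (1:ℝ≥0∞)) l
        = (Ioo (0:ℝ) c.toReal).indicator (fun _ => 1) l := by
      intro l hl
      simp only [mem_Ioi] at hl
      simp only [indicator_apply, mem_setOf_eq, mem_Ioo]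
      by_cases h : ENNReal.ofReal l < c
      · rw [if_pos h, if_pos ⟨hl, (ENNReal.ofReal_lt_iff_lt_toReal hl.le hc).1 h⟩]
      · rw [if_neg h, if_neg]
        intro hmem
        exact h ((ENNReal.ofReal_lt_iff_lt_toReal hl.le hc).2 hmem.2)
    rw [setLIntegral_congr_fun measurableSet_Ioi this,
      lintegral_indicator measurableSet_Ioo, Measure.restrict_restrict measurableSet_Ioo,
      inter_eq_left.2 (fun x hx => hx.1), setLIntegral_one, Real.volume_Ioo, sub_zero,
      ENNReal.ofReal_toReal hc]

lemma strong_type {w : ℝ → ℝ≥0∞} (hw : Measurable w) :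
    ∫⁻ t, (maxfn w t) ^ 2 ≤ 32 * ∫⁻ σ, (w σ) ^ 2 := by
  rw [layercake_sq (measurable_maxfn hw)]
  have key : ∀ l : ℝ, ENNReal.ofReal (2 * l) * volume {t | ENNReal.ofReal l < maxfn w t} ≤
      16 * ∫⁻ σ, w σ * {σ' : ℝ | ENNReal.ofReal l < 2 * w σ'}.indicator (fun _ => 1) σ := by
    intro l
    rcases le_or_gt l 0 with hl | hl
    · rw [ENNReal.ofReal_of_nonpos (by linarith), zero_mul]
      exact zero_le
    · set w₁ : ℝ → ℝ≥0∞ := fun σ =>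
        w σ * {σ' : ℝ | ENNReal.ofReal l < 2 * w σ'}.indicator (fun _ => 1) σ with hw₁
      have hw₁m : Measurable w₁ := by
        refine hw.mul (Measurable.indicator measurable_const ?_)
        exact measurableSet_lt measurable_const (measurable_const.mul hw)
      -- pointwise bound w ≤ w₁ + l/2
      have hptw : ∀ σ, w σ ≤ w₁ σ + ENNReal.ofReal (l / 2) := by
        intro σ
        rw [hw₁]
        simp only [indicator_apply, mem_setOf_eq]
        by_cases h : ENNReal.ofReal l < 2 * w σ
        · rw [if_pos h, mul_one]; exact le_self_add
        · rw [if_neg h, mul_zero, zero_add]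
          push_neg at h
          have h2 : w σ * 2 ≤ ENNReal.ofReal l := by rwa [mul_comm]
          have := (ENNReal.le_div_iff_mul_le (Or.inl two_ne_zero) (Or.inl ENNReal.ofNat_ne_top)).2 h2
          rwa [ENNReal.ofReal_div_of_pos (by norm_num), ENNReal.ofReal_ofNat] at *
      -- maximal functions
      have hmax : ∀ t, maxfn w t ≤ maxfn w₁ t + ENNReal.ofReal (l / 2) := by
        intro t
        refine iSup₂_le fun r hr => ?_
        have h2r0 : ENNReal.ofReal (2 * r) ≠ 0 := by
          simp only [ne_eq, ENNReal.ofReal_eq_zero, not_le]; linarith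
        have havg : mavg w t r ≤ mavg w₁ t r + ENNReal.ofReal (l / 2) := by
          rw [mavg, mavg]
          have : (∫⁻ σ in Ioo (t - r) (t + r), w σ) ≤
              (∫⁻ σ in Ioo (t - r) (t + r), w₁ σ) + ENNReal.ofReal (l / 2) * ENNReal.ofReal (2 * r) := by
            calc (∫⁻ σ in Ioo (t - r) (t + r), w σ)
                ≤ ∫⁻ σ in Ioo (t - r) (t + r), (w₁ σ + ENNReal.ofReal (l / 2)) :=
                  lintegral_mono fun σ => hptw σ
              _ = (∫⁻ σ in Ioo (t - r) (t + r), w₁ σ) + ENNReal.ofReal (l / 2) * ENNReal.ofReal (2 * r) := by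
                  rw [lintegral_add_right _ measurable_const, lintegral_const,
                    Measure.restrict_apply MeasurableSet.univ, univ_inter, Real.volume_Ioo]
                  congr 2
                  ring
          calc (ENNReal.ofReal (2 * r))⁻¹ * ∫⁻ σ in Ioo (t - r) (t + r), w σ
              ≤ (ENNReal.ofReal (2 * r))⁻¹ *
                ((∫⁻ σ in Ioo (t - r) (t + r), w₁ σ) + ENNReal.ofReal (l / 2) * ENNReal.ofReal (2 * r)) :=
                mul_le_mul' le_rfl this
            _ = (ENNReal.ofReal (2 * r))⁻¹ * (∫⁻ σ in Ioo (t - r) (t + r), w₁ σ) +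
                ENNReal.ofReal (l / 2) := by
                rw [mul_add]
                congr 1
                rw [mul_comm (ENNReal.ofReal (l/2)) _, ← mul_assoc,
                  ENNReal.inv_mul_cancel h2r0 ENNReal.ofReal_ne_top, one_mul]
        refine le_trans havg (add_le_add_left ?_ _)
        exact le_iSup₂ (f := fun r (_ : 0 < r) => mavg w₁ t r) r hr
      -- inclusion of superlevel sets
      have hincl : {t | ENNReal.ofReal l < maxfn w t} ⊆
          {t | ENNReal.ofReal (l / 2) < maxfn w₁ t} := by
        intro t ht
        simp only [mem_setOf_eq] at ht ⊢
        have hsplit : ENNReal.ofReal l = ENNReal.ofReal (l / 2) + ENNReal.ofReal (l / 2) := by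
          rw [← ENNReal.ofReal_add (by linarith) (by linarith)]
          congr 1; ring
        have := lt_of_lt_of_le ht (hmax t)
        rw [hsplit] at this
        exact lt_of_add_lt_add_right this
      -- weak type bound
      have hwk := weak_type hw₁m (show (0:ℝ) < l / 2 by linarith)
      have hvol : volume {t | ENNReal.ofReal l < maxfn w t} ≤
          4 * (ENNReal.ofReal (l / 2))⁻¹ * ∫⁻ σ, w₁ σ :=
        le_trans (measure_mono hincl) hwk
      calc ENNReal.ofReal (2 * l) * volume {t | ENNReal.ofReal l < maxfn w t}
          ≤ ENNReal.ofReal (2 * l) * (4 * (ENNReal.ofReal (l / 2))⁻¹ * ∫⁻ σ, w₁ σ) :=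
            mul_le_mul' le_rfl hvol
        _ = 16 * ∫⁻ σ, w₁ σ := by
            rw [← mul_assoc, ← mul_assoc]
            congr 1
            have h4 : ENNReal.ofReal (2 * l) = 4 * ENNReal.ofReal (l / 2) := by
              rw [show (2:ℝ) * l = 4 * (l / 2) by ring, ENNReal.ofReal_mul (by norm_num)]
              norm_num
            rw [h4, mul_comm (4 * ENNReal.ofReal (l / 2)) 4, mul_assoc, mul_assoc]
            rw [ENNReal.mul_inv_cancel (by simp only [ne_eq, ENNReal.ofReal_eq_zero, not_le]; linarith)
              ENNReal.ofReal_ne_top]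
            norm_num
  have hpair : ∀ (l σ : ℝ), w σ * {σ' : ℝ | ENNReal.ofReal l < 2 * w σ'}.indicator (fun _ => (1:ℝ≥0∞)) σ
      = w σ * {p : ℝ × ℝ | ENNReal.ofReal p.1 < 2 * w p.2}.indicator (fun _ => 1) (l, σ) := by
    intro l σ; simp only [indicator_apply, mem_setOf_eq]
  calc ∫⁻ l in Ioi (0:ℝ), ENNReal.ofReal (2 * l) * volume {t | ENNReal.ofReal l < maxfn w t}
      ≤ ∫⁻ l in Ioi (0:ℝ), 16 * ∫⁻ σ, w σ *
          {σ' : ℝ | ENNReal.ofReal l < 2 * w σ'}.indicator (fun _ => 1) σ :=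
        lintegral_mono key
    _ = ∫⁻ l in Ioi (0:ℝ), 16 * ∫⁻ σ, w σ *
          {p : ℝ × ℝ | ENNReal.ofReal p.1 < 2 * w p.2}.indicator (fun _ => 1) (l, σ) := by
        refine lintegral_congr fun l => ?_
        rw [lintegral_congr fun σ => hpair l σ]
    _ = 16 * ∫⁻ l in Ioi (0:ℝ), ∫⁻ σ, w σ *
          {p : ℝ × ℝ | ENNReal.ofReal p.1 < 2 * w p.2}.indicator (fun _ => 1) (l, σ) := by
        rw [lintegral_const_mul]
        refine Measurable.lintegral_prod_right' (f := fun p : ℝ × ℝ => w p.2 * _) ?_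
        refine (hw.comp measurable_snd).mul (Measurable.indicator measurable_const ?_)
        exact measurableSet_lt (ENNReal.measurable_ofReal.comp measurable_fst)
          (measurable_const.mul (hw.comp measurable_snd))
    _ = 16 * ∫⁻ σ, ∫⁻ l in Ioi (0:ℝ), w σ *
          {p : ℝ × ℝ | ENNReal.ofReal p.1 < 2 * w p.2}.indicator (fun _ => 1) (l, σ) := by
        congr 1
        refine lintegral_lintegral_swap ?_
        refine AEMeasurable.mul ?_ ?_
        · exact (hw.comp measurable_snd).aemeasurable
        · refine (Measurable.indicator measurable_const ?_).aemeasurable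
          exact measurableSet_lt (ENNReal.measurable_ofReal.comp measurable_fst)
            (measurable_const.mul (hw.comp measurable_snd))
    _ = 16 * ∫⁻ σ, w σ * (2 * w σ) := by
        congr 1
        refine lintegral_congr fun σ => ?_
        have h1 : ∀ l : ℝ, w σ * {p : ℝ × ℝ | ENNReal.ofReal p.1 < 2 * w p.2}.indicator
            (fun _ => (1:ℝ≥0∞)) (l, σ) =
            w σ * {l' : ℝ | ENNReal.ofReal l' < 2 * w σ}.indicator (fun _ => 1) l := by
          intro l; simp only [indicator_apply, mem_setOf_eq]
        rw [setLIntegral_congr_fun measurableSet_Ioi (fun l _ => h1 l)]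
        rw [lintegral_const_mul _ (Measurable.indicator measurable_const
          (measurableSet_lt ENNReal.measurable_ofReal measurable_const))]
        rw [lintegral_indicator_lt (2 * w σ)]
    _ = 32 * ∫⁻ σ, (w σ) ^ 2 := by
        have h2 : ∀ σ : ℝ, w σ * (2 * w σ) = 2 * (w σ) ^ 2 := fun σ => by ring
        simp_rw [h2]
        rw [lintegral_const_mul _ (hw.pow_const 2), ← mul_assoc]
        norm_num


lemma hardy_pointwise {h : ℝ → ℝ≥0∞} (hh : Measurable h) {t : ℝ} (ht : 0 < t) :
    (∫⁻ σ in Ioi t, h σ) ^ 2 ≤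
      (∫⁻ σ in Ioi t, (h σ) ^ 2 * ENNReal.ofReal (σ ^ ((3:ℝ)/2))) *
        ENNReal.ofReal (2 * t ^ (-(1:ℝ)/2)) := by
  set f : ℝ → ℝ≥0∞ := fun σ => h σ * ENNReal.ofReal (σ ^ ((3:ℝ)/4)) with hf
  set g : ℝ → ℝ≥0∞ := fun σ => ENNReal.ofReal (σ ^ (-(3:ℝ)/4)) with hg
  have hfm : Measurable f := hh.mul (ENNReal.measurable_ofReal.comp (by fun_prop : Measurable fun σ:ℝ => σ ^ ((3:ℝ)/4)))
  have hgm : Measurable g := ENNReal.measurable_ofReal.comp (by fun_prop : Measurable fun σ:ℝ => σ ^ (-(3:ℝ)/4))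
  have hsplit : ∀ σ ∈ Ioi t, h σ = (f * g) σ := by
    intro σ hσ
    have hσ0 : 0 < σ := ht.trans hσ
    simp only [hf, hg, Pi.mul_apply]
    rw [mul_assoc, ← ENNReal.ofReal_mul (Real.rpow_nonneg hσ0.le _), ← Real.rpow_add hσ0]
    norm_num
  have hconj : Real.HolderConjugate 2 2 := Real.HolderConjugate.two_two
  have CS := ENNReal.lintegral_mul_le_Lp_mul_Lq (volume.restrict (Ioi t)) hconj
    hfm.aemeasurable hgm.aemeasurable
  have hsq : (∫⁻ σ in Ioi t, h σ) ^ 2 ≤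
      ((∫⁻ σ in Ioi t, f σ ^ (2:ℝ)) ^ (1/(2:ℝ)) * (∫⁻ σ in Ioi t, g σ ^ (2:ℝ)) ^ (1/(2:ℝ))) ^ 2 := by
    rw [setLIntegral_congr_fun measurableSet_Ioi hsplit]
    exact pow_le_pow_left' CS 2
  refine le_trans hsq (le_of_eq ?_)
  have expand : ∀ A B : ℝ≥0∞, (A ^ (1/(2:ℝ)) * B ^ (1/(2:ℝ))) ^ 2 = A * B := by
    intro A B
    rw [mul_pow, ← ENNReal.rpow_natCast (A ^ (1/(2:ℝ))) 2, ← ENNReal.rpow_natCast (B ^ (1/(2:ℝ))) 2,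
      ← ENNReal.rpow_mul, ← ENNReal.rpow_mul]
    norm_num
  rw [expand]
  congr 1
  · refine setLIntegral_congr_fun measurableSet_Ioi (fun σ hσ => ?_)
    have hσ0 : 0 < σ := ht.trans hσ
    rw [hf]
    rw [ENNReal.rpow_two, mul_pow, ← ENNReal.ofReal_pow (Real.rpow_nonneg hσ0.le _),
      ← Real.rpow_natCast (σ ^ ((3:ℝ)/4)) 2, ← Real.rpow_mul hσ0.le]
    norm_num
  · have hgeq : ∀ σ ∈ Ioi t, g σ ^ (2:ℝ) = ENNReal.ofReal (σ ^ (-(3:ℝ)/2)) := by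
      intro σ hσ
      have hσ0 : 0 < σ := ht.trans hσ
      rw [hg, ENNReal.rpow_two, ← ENNReal.ofReal_pow (Real.rpow_nonneg hσ0.le _),
        ← Real.rpow_natCast (σ ^ (-(3:ℝ)/4)) 2, ← Real.rpow_mul hσ0.le]
      norm_num
    rw [setLIntegral_congr_fun measurableSet_Ioi hgeq]
    rw [← ofReal_integral_eq_lintegral_ofReal (integrableOn_Ioi_rpow_of_lt (by norm_num) ht)
      (Filter.Eventually.mono (ae_restrict_mem measurableSet_Ioi)
        (fun σ hσ => Real.rpow_nonneg (ht.trans hσ).le _))]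
    rw [integral_Ioi_rpow_of_lt (by norm_num) ht]
    congr 1
    rw [show (-(3:ℝ)/2 + 1) = -(1:ℝ)/2 by norm_num]
    ring

lemma hardy {h : ℝ → ℝ≥0∞} (hh : Measurable h) :
    ∫⁻ t in Ioi (0:ℝ), (∫⁻ σ in Ioi t, h σ) ^ 2 ≤
      4 * ∫⁻ σ in Ioi (0:ℝ), (h σ) ^ 2 * (ENNReal.ofReal σ) ^ 2 := by
  set G : ℝ → ℝ≥0∞ := fun σ => (h σ) ^ 2 * ENNReal.ofReal (σ ^ ((3:ℝ)/2)) with hG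
  have hGm : Measurable G :=
    (hh.pow_const 2).mul (ENNReal.measurable_ofReal.comp
      (by fun_prop : Measurable fun σ:ℝ => σ ^ ((3:ℝ)/2)))
  have hKm : Measurable (fun p : ℝ × ℝ =>
      (G p.2 * ENNReal.ofReal (2 * p.1 ^ (-(1:ℝ)/2))) *
        {q : ℝ × ℝ | q.1 < q.2}.indicator (fun _ => 1) p) := by
    refine Measurable.mul ?_ (Measurable.indicator measurable_const ?_)
    · exact (hGm.comp measurable_snd).mul (ENNReal.measurable_ofReal.comp
        ((by fun_prop : Measurable fun t:ℝ => 2 * t ^ (-(1:ℝ)/2)).comp measurable_fst))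
    · exact measurableSet_lt measurable_fst measurable_snd
  calc ∫⁻ t in Ioi (0:ℝ), (∫⁻ σ in Ioi t, h σ) ^ 2
      ≤ ∫⁻ t in Ioi (0:ℝ), (∫⁻ σ in Ioi t, G σ) * ENNReal.ofReal (2 * t ^ (-(1:ℝ)/2)) := by
        refine setLIntegral_mono ?_ fun t ht => hardy_pointwise hh ht
        refine Measurable.mul ?_ (ENNReal.measurable_ofReal.comp
          (by fun_prop : Measurable fun t:ℝ => 2 * t ^ (-(1:ℝ)/2)))
        exact Antitone.measurable fun a b hab => lintegral_mono_set (Ioi_subset_Ioi hab)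
    _ = ∫⁻ t in Ioi (0:ℝ), ∫⁻ σ, (G σ * ENNReal.ofReal (2 * t ^ (-(1:ℝ)/2))) *
          {q : ℝ × ℝ | q.1 < q.2}.indicator (fun _ => 1) (t, σ) := by
        refine lintegral_congr fun t => ?_
        have h1 : ∀ σ : ℝ, (G σ * ENNReal.ofReal (2 * t ^ (-(1:ℝ)/2))) *
            {q : ℝ × ℝ | q.1 < q.2}.indicator (fun _ => (1:ℝ≥0∞)) (t, σ)
            = ((Ioi t).indicator G σ) * ENNReal.ofReal (2 * t ^ (-(1:ℝ)/2)) := by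
          intro σ
          simp only [indicator_apply, mem_setOf_eq, mem_Ioi]
          by_cases hσ : t < σ
          · rw [if_pos hσ, if_pos hσ, mul_one]
          · rw [if_neg hσ, if_neg hσ, mul_zero, zero_mul]
        simp_rw [h1]
        rw [lintegral_mul_const _ (hGm.indicator measurableSet_Ioi),
          lintegral_indicator measurableSet_Ioi]
    _ = ∫⁻ σ, ∫⁻ t in Ioi (0:ℝ), (G σ * ENNReal.ofReal (2 * t ^ (-(1:ℝ)/2))) *
          {q : ℝ × ℝ | q.1 < q.2}.indicator (fun _ => 1) (t, σ) :=
        lintegral_lintegral_swap hKm.aemeasurable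
    _ = ∫⁻ σ, (Ioi (0:ℝ)).indicator (fun σ => G σ * ENNReal.ofReal (4 * σ ^ ((1:ℝ)/2))) σ := by
        refine lintegral_congr fun σ => ?_
        rcases le_or_gt σ 0 with hσ | hσ
        · rw [indicator_of_notMem (show σ ∉ Ioi (0:ℝ) from fun hc => absurd (mem_Ioi.1 hc) (not_lt.2 hσ))]
          refine (setLIntegral_congr_fun measurableSet_Ioi
            (fun t ht => ?_)).trans lintegral_zero
          have hns : ¬ ((t, σ).1 < (t, σ).2) := by push_neg; exact hσ.trans (le_of_lt ht)
          simp only [indicator_apply, mem_setOf_eq, if_neg hns, mul_zero]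
        · rw [indicator_of_mem (show σ ∈ Ioi (0:ℝ) from mem_Ioi.mpr hσ)]
          have h2 : ∀ t ∈ Ioi (0:ℝ), (G σ * ENNReal.ofReal (2 * t ^ (-(1:ℝ)/2))) *
              {q : ℝ × ℝ | q.1 < q.2}.indicator (fun _ => (1:ℝ≥0∞)) (t, σ)
              = G σ * ((Iio σ).indicator (fun t => ENNReal.ofReal (2 * t ^ (-(1:ℝ)/2))) t) := by
            intro t _
            simp only [indicator_apply, mem_setOf_eq, mem_Iio]
            by_cases h : t < σ
            · rw [if_pos h, if_pos h, mul_one, mul_assoc]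
            · rw [if_neg h, if_neg h, mul_zero, mul_zero]
          rw [setLIntegral_congr_fun measurableSet_Ioi h2]
          rw [lintegral_const_mul _ (Measurable.indicator
            (by fun_prop : Measurable fun t:ℝ => ENNReal.ofReal (2 * t ^ (-(1:ℝ)/2)))
            measurableSet_Iio)]
          congr 1
          rw [lintegral_indicator measurableSet_Iio, Measure.restrict_restrict measurableSet_Iio,
            show Iio σ ∩ Ioi (0:ℝ) = Ioo 0 σ by rw [inter_comm, Ioi_inter_Iio]]
          have hInt : IntegrableOn (fun t : ℝ => 2 * t ^ (-(1:ℝ)/2)) (Ioo 0 σ) := by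
            refine (IntegrableOn.mono_set ?_ Ioo_subset_Ioc_self).const_mul 2
            have := (intervalIntegral.intervalIntegrable_rpow'
              (a := 0) (b := σ) (r := -(1:ℝ)/2) (by norm_num))
            rwa [intervalIntegrable_iff_integrableOn_Ioc_of_le hσ.le] at this
          rw [← ofReal_integral_eq_lintegral_ofReal hInt
            (Filter.Eventually.mono (ae_restrict_mem measurableSet_Ioo)
              (fun t ht => by have h0 := ht.1; positivity))]
          congr 1
          rw [← integral_Ioc_eq_integral_Ioo, ← intervalIntegral.integral_of_le hσ.le,
            intervalIntegral.integral_const_mul, integral_rpow (Or.inl (by norm_num))]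
          rw [Real.zero_rpow (by norm_num)]
          norm_num
          ring
    _ = ∫⁻ σ in Ioi (0:ℝ), G σ * ENNReal.ofReal (4 * σ ^ ((1:ℝ)/2)) := by
        rw [lintegral_indicator measurableSet_Ioi]
    _ = ∫⁻ σ in Ioi (0:ℝ), 4 * ((h σ) ^ 2 * (ENNReal.ofReal σ) ^ 2) := by
        refine setLIntegral_congr_fun measurableSet_Ioi
          (fun σ hσ => ?_)
        have hσ0 : (0:ℝ) < σ := hσ
        rw [hG, mul_assoc, ← ENNReal.ofReal_mul (Real.rpow_nonneg hσ0.le _)]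
        rw [show σ ^ ((3:ℝ)/2) * (4 * σ ^ ((1:ℝ)/2)) = 4 * (σ ^ ((3:ℝ)/2) * σ ^ ((1:ℝ)/2)) by ring,
          ← Real.rpow_add hσ0]
        rw [show (3:ℝ)/2 + 1/2 = ((2:ℕ):ℝ) by norm_num, Real.rpow_natCast,
          ENNReal.ofReal_mul (by norm_num), ← ENNReal.ofReal_pow hσ0.le]
        rw [show ENNReal.ofReal 4 = 4 by norm_num]
        ring
    _ = 4 * ∫⁻ σ in Ioi (0:ℝ), (h σ) ^ 2 * (ENNReal.ofReal σ) ^ 2 := by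
        rw [lintegral_const_mul' _ _ (by norm_num)]


variable {f : ℝ → ℝ}

lemma integrableOn_deriv_tail (hf : ContDiff ℝ 1 f)
    (hE : (∫⁻ ρ in Ioi (0:ℝ), ENNReal.ofReal (|deriv f ρ|^2 * ρ^2)) < ⊤)
    {a : ℝ} (ha : 0 < a) : IntegrableOn (deriv f) (Ioi a) := by
  have hcont : Continuous (deriv f) := hf.continuous_deriv le_rfl
  refine ⟨hcont.aestronglyMeasurable.restrict, ?_⟩
  rw [hasFiniteIntegral_iff_norm]
  simp_rw [Real.norm_eq_abs]
  have hbd : ∀ σ ∈ Ioi a, ENNReal.ofReal |deriv f σ| ≤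
      ENNReal.ofReal (|deriv f σ|^2 * σ^2) + ENNReal.ofReal (σ ^ (-(2:ℝ))) := by
    intro σ hσ
    have hσ0 : 0 < σ := ha.trans hσ
    rw [← ENNReal.ofReal_add (by positivity) (Real.rpow_nonneg hσ0.le _)]
    refine ENNReal.ofReal_le_ofReal ?_
    rw [show σ ^ (-(2:ℝ)) = (σ⁻¹)^2 by
      rw [← Real.rpow_natCast σ⁻¹ 2, ← Real.rpow_neg_one σ, ← Real.rpow_mul hσ0.le]; norm_num]
    nlinarith [sq_nonneg (|deriv f σ| * σ - σ⁻¹), abs_nonneg (deriv f σ), sq_nonneg σ,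
      mul_pos hσ0 hσ0, sq_abs (deriv f σ), mul_inv_cancel₀ hσ0.ne']
  calc ∫⁻ σ in Ioi a, ENNReal.ofReal |deriv f σ|
      ≤ ∫⁻ σ in Ioi a, (ENNReal.ofReal (|deriv f σ|^2 * σ^2) + ENNReal.ofReal (σ ^ (-(2:ℝ)))) :=
        setLIntegral_mono (by fun_prop) hbd
    _ = (∫⁻ σ in Ioi a, ENNReal.ofReal (|deriv f σ|^2 * σ^2)) +
        ∫⁻ σ in Ioi a, ENNReal.ofReal (σ ^ (-(2:ℝ))) := by
        rw [lintegral_add_right _ (by fun_prop)]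
    _ < ⊤ := by
        refine ENNReal.add_lt_top.2 ⟨lt_of_le_of_lt ?_ hE, ?_⟩
        · exact lintegral_mono_set (Ioi_subset_Ioi ha.le)
        · rw [← ofReal_integral_eq_lintegral_ofReal
            (integrableOn_Ioi_rpow_of_lt (by norm_num) ha)
            (Filter.Eventually.mono (ae_restrict_mem measurableSet_Ioi)
              (fun σ hσ => Real.rpow_nonneg (ha.trans hσ).le _))]
          exact ENNReal.ofReal_lt_top

lemma abs_le_tail_lintegral (hf : ContDiff ℝ 1 f) (h0 : Tendsto f atTop (nhds 0))
    (hE : (∫⁻ ρ in Ioi (0:ℝ), ENNReal.ofReal (|deriv f ρ|^2 * ρ^2)) < ⊤)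
    {a : ℝ} (ha : 0 < a) :
    ENNReal.ofReal |f a| ≤ ∫⁻ σ in Ioi a, ENNReal.ofReal |deriv f σ| := by
  have hint := integrableOn_deriv_tail hf hE ha
  have key : ∫ σ in Ioi a, deriv f σ = 0 - f a :=
    integral_Ioi_of_hasDerivAt_of_tendsto'
      (fun x _ => (hf.differentiable one_ne_zero x).hasDerivAt) hint h0
  have habs : |f a| ≤ ∫ σ in Ioi a, |deriv f σ| := by
    have h1 : |f a| = |∫ σ in Ioi a, deriv f σ| := by rw [key]; rw [zero_sub, abs_neg]
    rw [h1]
    simpa [Real.norm_eq_abs] using norm_integral_le_integral_norm (μ := volume.restrict (Ioi a))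
      (f := deriv f)
  calc ENNReal.ofReal |f a| ≤ ENNReal.ofReal (∫ σ in Ioi a, |deriv f σ|) :=
        ENNReal.ofReal_le_ofReal habs
    _ = ∫⁻ σ in Ioi a, ENNReal.ofReal |deriv f σ| := by
        rw [ofReal_integral_eq_lintegral_ofReal hint.abs
          (Filter.Eventually.of_forall fun σ => abs_nonneg _)]

lemma hasDerivAt_absmul (hf : ContDiff ℝ 1 f) (s : ℝ) :
    HasDerivAt (fun u => u * f |u|) (f |s| + |s| * deriv f |s|) s := by
  rcases lt_trichotomy s 0 with hs | rfl | hs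
  · have h1 : HasDerivAt (fun u : ℝ => f (-u)) (deriv f (-s) * (-1)) s :=
      ((hf.differentiable one_ne_zero (-s)).hasDerivAt).comp s (hasDerivAt_neg s)
    have h2 : HasDerivAt (fun u : ℝ => u * f (-u))
        (1 * f (-s) + s * (deriv f (-s) * (-1))) s := (hasDerivAt_id s).mul h1
    have h3 : (fun u : ℝ => u * f |u|) =ᶠ[𝓝 s] fun u => u * f (-u) := by
      filter_upwards [Iio_mem_nhds hs] with u hu
      rw [abs_of_neg hu]
    have heq : f |s| + |s| * deriv f |s| = 1 * f (-s) + s * (deriv f (-s) * (-1)) := by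
      rw [abs_of_neg hs]; ring
    rw [heq]
    exact h2.congr_of_eventuallyEq h3
  · rw [hasDerivAt_iff_tendsto_slope]
    have hcong : ∀ u ∈ ({(0:ℝ)}ᶜ : Set ℝ), f |u| = slope (fun u : ℝ => u * f |u|) 0 u := by
      intro u hu
      have hu0 : u ≠ 0 := hu
      rw [slope_def_field]
      field_simp
      ring
    have hlim : Tendsto (fun u : ℝ => f |u|) (𝓝[≠] (0:ℝ)) (𝓝 (f |0| + |0| * deriv f |0|)) := by
      rw [abs_zero, zero_mul, add_zero]
      have h4 := (hf.continuous.comp continuous_abs).tendsto 0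
      simp only [Function.comp_apply, abs_zero] at h4
      exact h4.mono_left nhdsWithin_le_nhds
    exact hlim.congr' (eventually_mem_nhdsWithin.mono hcong)
  · have h2 : HasDerivAt (fun u : ℝ => u * f u)
        (1 * f s + s * deriv f s) s := (hasDerivAt_id s).mul (hf.differentiable one_ne_zero s).hasDerivAt
    have h3 : (fun u : ℝ => u * f |u|) =ᶠ[𝓝 s] fun u => u * f u := by
      filter_upwards [Ioi_mem_nhds hs] with u hu
      rw [abs_of_pos hu]
    have heq : f |s| + |s| * deriv f |s| = 1 * f s + s * deriv f s := by
      rw [abs_of_pos hs]; ring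
    rw [heq]
    exact h2.congr_of_eventuallyEq h3
lemma ofReal_v_le {f : ℝ → ℝ} (hf : ContDiff ℝ 1 f) {t r : ℝ} (ht : 0 < t) (hr : 0 < r) :
    ENNReal.ofReal |(1/r) * (f (r + t) * (r + t) - f |r - t| * (t - r))| ≤
      2 * mavg (fun σ => ENNReal.ofReal (abs (f |σ| + |σ| * deriv f |σ|))) t r := by
  set ψ : ℝ → ℝ := fun σ => f |σ| + |σ| * deriv f |σ| with hψ
  have hψc : Continuous ψ := by
    refine ((hf.continuous.comp continuous_abs).add ?_)
    exact continuous_abs.mul ((hf.continuous_deriv le_rfl).comp continuous_abs)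
  have hab : t - r ≤ t + r := by linarith
  have hFTC : ∫ σ in (t - r)..(t + r), ψ σ = (t + r) * f |t + r| - (t - r) * f |t - r| :=
    intervalIntegral.integral_eq_sub_of_hasDerivAt
      (fun x _ => hasDerivAt_absmul hf x) (hψc.intervalIntegrable _ _)
  have hvrw : f (r + t) * (r + t) - f |r - t| * (t - r) = ∫ σ in (t - r)..(t + r), ψ σ := by
    rw [hFTC, abs_of_pos (by linarith : (0:ℝ) < t + r), abs_sub_comm t r, add_comm r t]
    ring
  have habs : |∫ σ in (t - r)..(t + r), ψ σ| ≤ ∫ σ in Ioc (t - r) (t + r), |ψ σ| := by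
    rw [intervalIntegral.integral_of_le hab]
    simpa [Real.norm_eq_abs] using
      norm_integral_le_integral_norm (μ := volume.restrict (Ioc (t - r) (t + r))) (f := ψ)
  have hint : IntegrableOn (fun σ => |ψ σ|) (Ioc (t - r) (t + r)) :=
    (hψc.abs.integrableOn_Icc).mono_set Ioc_subset_Icc_self
  calc ENNReal.ofReal |(1/r) * (f (r + t) * (r + t) - f |r - t| * (t - r))|
      = ENNReal.ofReal (1/r) * ENNReal.ofReal |∫ σ in (t - r)..(t + r), ψ σ| := by
        rw [hvrw, abs_mul, abs_of_pos (by positivity : (0:ℝ) < 1/r),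
          ENNReal.ofReal_mul (by positivity)]
    _ ≤ ENNReal.ofReal (1/r) * ENNReal.ofReal (∫ σ in Ioc (t - r) (t + r), |ψ σ|) :=
        mul_le_mul' le_rfl (ENNReal.ofReal_le_ofReal habs)
    _ = ENNReal.ofReal (1/r) * ∫⁻ σ in Ioc (t - r) (t + r), ENNReal.ofReal |ψ σ| := by
        rw [ofReal_integral_eq_lintegral_ofReal hint
          (Filter.Eventually.of_forall fun σ => abs_nonneg _)]
    _ = ENNReal.ofReal (1/r) * ∫⁻ σ in Ioo (t - r) (t + r), ENNReal.ofReal |ψ σ| := by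
        rw [setLIntegral_congr (Ioo_ae_eq_Ioc (μ := volume) (a := t - r) (b := t + r)).symm]
    _ = 2 * mavg (fun σ => ENNReal.ofReal (abs (f |σ| + |σ| * deriv f |σ|))) t r := by
        rw [mavg]
        rw [← mul_assoc]
        congr 1
        rw [ENNReal.ofReal_mul (by norm_num : (0:ℝ) ≤ 2),
          ENNReal.mul_inv (Or.inl (by norm_num)) (Or.inl (by norm_num)), ← mul_assoc,
          show ENNReal.ofReal 2 = 2 by norm_num]
        rw [ENNReal.mul_inv_cancel (by norm_num) (by norm_num), one_mul, one_div,
          ENNReal.ofReal_inv_of_pos hr]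

lemma sq_add_le (a b : ℝ≥0∞) : (a + b) ^ 2 ≤ 4 * a ^ 2 + 4 * b ^ 2 := by
  have h1 : a + b ≤ 2 * (a ⊔ b) := by
    rw [two_mul]
    exact add_le_add le_sup_left le_sup_right
  calc (a + b) ^ 2 ≤ (2 * (a ⊔ b)) ^ 2 := pow_le_pow_left' h1 2
    _ = 4 * (a ⊔ b) ^ 2 := by rw [mul_pow]; ring_nf
    _ ≤ 4 * a ^ 2 + 4 * b ^ 2 := by
        rcases le_total a b with h | h
        · rw [sup_eq_right.2 h]; exact le_add_self
        · rw [sup_eq_left.2 h]; exact le_self_add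

lemma lintegral_even_le {g : ℝ → ℝ≥0∞} (hg : Measurable g) (hsym : ∀ σ, g (-σ) = g σ) :
    ∫⁻ σ, g σ ≤ 2 * ∫⁻ σ in Ioi (0:ℝ), g σ := by
  have h1 : ∫⁻ σ, g σ = (∫⁻ σ in Iio (0:ℝ), g σ) + ∫⁻ σ in Ici (0:ℝ), g σ := by
    rw [← compl_Iio, lintegral_add_compl g measurableSet_Iio]
  have h2 : ∫⁻ σ in Ici (0:ℝ), g σ = ∫⁻ σ in Ioi (0:ℝ), g σ :=
    (setLIntegral_congr (Ioi_ae_eq_Ici (a := (0:ℝ)) (μ := volume))).symm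
  have h3 : ∫⁻ σ in Iio (0:ℝ), g σ = ∫⁻ σ in Ioi (0:ℝ), g σ := by
    have hm : MeasurePreserving (fun x : ℝ => -x) volume volume :=
      Measure.measurePreserving_neg _
    have hemb : MeasurableEmbedding (fun x : ℝ => -x) :=
      (Homeomorph.neg ℝ).measurableEmbedding
    have := hm.setLIntegral_comp_preimage_emb hemb g (Iio 0)
    rw [show (fun x : ℝ => -x) ⁻¹' (Iio 0) = Ioi 0 by
      ext x; simp only [mem_preimage, mem_Iio, mem_Ioi, neg_lt_zero]] at this
    rw [← this]
    refine setLIntegral_congr_fun measurableSet_Ioi (fun σ _ => ?_)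
    exact hsym σ
  rw [h1, h2, h3, two_mul]

end RadialWave

open RadialWave Set

/-- Endpoint bound for the radial free wave with data `(f,0)`: with
`v(t,r) = r⁻¹ [f(r+t)(r+t) - f(|r-t|)(t-r)]`, one has
`‖sup_{r>0}|v(t,r)|‖_{L²_t(0,∞)} ≤ C ‖∇f‖_{L²(ℝ³)}`, where for radial `f` the
`Ḣ¹(ℝ³)` seminorm is a constant multiple of `(∫_0^∞ |f'(ρ)|²ρ² dρ)^{1/2}`
(stated in squared form). -/
theorem radial_wave_data_f_bound :
    ∃ C : ℝ≥0∞, 0 < C ∧ C < ⊤ ∧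
      ∀ f : ℝ → ℝ, ContDiff ℝ 1 f → Tendsto f atTop (nhds 0) →
        (∫⁻ ρ in Set.Ioi (0:ℝ), ENNReal.ofReal (|deriv f ρ|^2 * ρ^2)) < ⊤ →
        ∀ v : ℝ → ℝ → ℝ,
          (∀ t r, 0 < t → 0 < r →
            v t r = (1/r) * (f (r + t) * (r + t) - f |r - t| * (t - r))) →
          (∫⁻ t in Set.Ioi (0:ℝ),
              (⨆ (r : ℝ) (_ : 0 < r), ENNReal.ofReal |v t r|)^2) ≤
            C * ∫⁻ ρ in Set.Ioi (0:ℝ), ENNReal.ofReal (|deriv f ρ|^2 * ρ^2) := by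
  refine ⟨5120, by norm_num, by norm_num, ?_⟩
  intro f hf h0 hE v hv
  set E := ∫⁻ ρ in Ioi (0:ℝ), ENNReal.ofReal (|deriv f ρ|^2 * ρ^2) with hEdef
  set W : ℝ → ℝ≥0∞ := fun σ => ENNReal.ofReal (abs (f |σ| + |σ| * deriv f |σ|)) with hW
  have hWc : Continuous W := by
    refine ENNReal.continuous_ofReal.comp (Continuous.abs ?_)
    exact (hf.continuous.comp continuous_abs).add
      (continuous_abs.mul ((hf.continuous_deriv le_rfl).comp continuous_abs))
  have hWm : Measurable W := hWc.measurable
  have hWsym : ∀ σ, W (-σ) = W σ := by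
    intro σ; rw [hW]; simp only [abs_neg]
  -- pointwise bound of the sup by the maximal function
  have hsup : ∀ t ∈ Ioi (0:ℝ),
      (⨆ (r : ℝ) (_ : 0 < r), ENNReal.ofReal |v t r|) ^ 2 ≤ 4 * (maxfn W t) ^ 2 := by
    intro t ht
    have h1 : (⨆ (r : ℝ) (_ : 0 < r), ENNReal.ofReal |v t r|) ≤ 2 * maxfn W t := by
      refine iSup₂_le fun r hr => ?_
      rw [hv t r ht hr]
      refine le_trans (ofReal_v_le hf ht hr) (mul_le_mul' le_rfl ?_)
      exact le_iSup₂ (f := fun r (_ : 0 < r) => mavg W t r) r hr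
    calc (⨆ (r : ℝ) (_ : 0 < r), ENNReal.ofReal |v t r|) ^ 2
        ≤ (2 * maxfn W t) ^ 2 := pow_le_pow_left' h1 2
      _ = 4 * (maxfn W t) ^ 2 := by rw [mul_pow]; ring_nf
  -- Hardy + pointwise: bound of ∫ W² on (0,∞)
  have hF : ∀ σ : ℝ, σ ∈ Ioi (0:ℝ) → W σ ≤
      (∫⁻ ρ in Ioi σ, ENNReal.ofReal |deriv f ρ|) +
        ENNReal.ofReal |deriv f σ| * ENNReal.ofReal σ := by
    intro σ hσ
    have hσ0 : (0:ℝ) < σ := hσ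
    have h1 : W σ ≤ ENNReal.ofReal |f σ| + ENNReal.ofReal (|deriv f σ| * σ) := by
      rw [hW]
      simp only [abs_of_pos hσ0]
      rw [← ENNReal.ofReal_add (abs_nonneg _) (by positivity)]
      refine ENNReal.ofReal_le_ofReal ?_
      refine le_trans (abs_add_le _ _) ?_
      rw [abs_mul, abs_of_pos hσ0]
      nlinarith [abs_nonneg (deriv f σ)]
    refine le_trans h1 (add_le_add ?_ ?_)
    · exact abs_le_tail_lintegral hf h0 hE hσ0
    · rw [ENNReal.ofReal_mul (abs_nonneg _)]
  have hWsq : ∀ σ ∈ Ioi (0:ℝ), (W σ) ^ 2 ≤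
      4 * (∫⁻ ρ in Ioi σ, ENNReal.ofReal |deriv f ρ|) ^ 2 +
        4 * ((ENNReal.ofReal |deriv f σ|) ^ 2 * (ENNReal.ofReal σ) ^ 2) := by
    intro σ hσ
    refine le_trans (pow_le_pow_left' (hF σ hσ) 2) ?_
    refine le_trans (sq_add_le _ _) ?_
    rw [mul_pow]
  have hEconv : ∀ σ ∈ Ioi (0:ℝ),
      (ENNReal.ofReal |deriv f σ|) ^ 2 * (ENNReal.ofReal σ) ^ 2 =
        ENNReal.ofReal (|deriv f σ|^2 * σ^2) := by
    intro σ hσ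
    rw [← ENNReal.ofReal_pow (abs_nonneg _), ← ENNReal.ofReal_pow (le_of_lt hσ),
      ← ENNReal.ofReal_mul (by positivity)]
  have hhm : Measurable fun σ : ℝ => ENNReal.ofReal |deriv f σ| := by
    have : Continuous fun σ : ℝ => ENNReal.ofReal |deriv f σ| :=
      ENNReal.continuous_ofReal.comp (hf.continuous_deriv le_rfl).abs
    exact this.measurable
  have hFm : Measurable fun σ : ℝ => ∫⁻ ρ in Ioi σ, ENNReal.ofReal |deriv f ρ| :=
    Antitone.measurable fun a b hab => lintegral_mono_set (Ioi_subset_Ioi hab)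
  have hWIoi : ∫⁻ σ in Ioi (0:ℝ), (W σ) ^ 2 ≤ 20 * E := by
    have hhardy := hardy hhm
    calc ∫⁻ σ in Ioi (0:ℝ), (W σ) ^ 2
        ≤ ∫⁻ σ in Ioi (0:ℝ),
            (4 * (∫⁻ ρ in Ioi σ, ENNReal.ofReal |deriv f ρ|) ^ 2 +
              4 * ((ENNReal.ofReal |deriv f σ|) ^ 2 * (ENNReal.ofReal σ) ^ 2)) := by
          refine setLIntegral_mono ?_ hWsq
          exact ((hFm.pow_const 2).const_mul 4).add
            ((((hhm.pow_const 2)).mul (by fun_prop)).const_mul 4)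
      _ = 4 * (∫⁻ σ in Ioi (0:ℝ), (∫⁻ ρ in Ioi σ, ENNReal.ofReal |deriv f ρ|) ^ 2) +
          4 * ∫⁻ σ in Ioi (0:ℝ), (ENNReal.ofReal |deriv f σ|) ^ 2 * (ENNReal.ofReal σ) ^ 2 := by
          rw [lintegral_add_left ((hFm.pow_const 2).const_mul 4),
            lintegral_const_mul' _ _ (by norm_num), lintegral_const_mul' _ _ (by norm_num)]
      _ ≤ 4 * (4 * ∫⁻ σ in Ioi (0:ℝ), (ENNReal.ofReal |deriv f σ|) ^ 2 * (ENNReal.ofReal σ) ^ 2) +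
          4 * ∫⁻ σ in Ioi (0:ℝ), (ENNReal.ofReal |deriv f σ|) ^ 2 * (ENNReal.ofReal σ) ^ 2 :=
          add_le_add (mul_le_mul' le_rfl hhardy) le_rfl
      _ = 20 * ∫⁻ σ in Ioi (0:ℝ), (ENNReal.ofReal |deriv f σ|) ^ 2 * (ENNReal.ofReal σ) ^ 2 := by
          ring
      _ = 20 * E := by
          rw [hEdef, setLIntegral_congr_fun measurableSet_Ioi
            hEconv]
  -- combine
  calc ∫⁻ t in Ioi (0:ℝ), (⨆ (r : ℝ) (_ : 0 < r), ENNReal.ofReal |v t r|) ^ 2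
      ≤ ∫⁻ t in Ioi (0:ℝ), 4 * (maxfn W t) ^ 2 :=
        setLIntegral_mono (((measurable_maxfn hWm).pow_const 2).const_mul 4) hsup
    _ ≤ ∫⁻ t, 4 * (maxfn W t) ^ 2 := setLIntegral_le_lintegral _ _
    _ = 4 * ∫⁻ t, (maxfn W t) ^ 2 := lintegral_const_mul' _ _ (by norm_num)
    _ ≤ 4 * (32 * ∫⁻ σ, (W σ) ^ 2) := mul_le_mul' le_rfl (strong_type hWm)
    _ ≤ 4 * (32 * (2 * ∫⁻ σ in Ioi (0:ℝ), (W σ) ^ 2)) := by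
        refine mul_le_mul' le_rfl (mul_le_mul' le_rfl ?_)
        exact lintegral_even_le (hWm.pow_const 2) fun σ => by rw [hWsym σ]
    _ ≤ 4 * (32 * (2 * (20 * E))) := by
        exact mul_le_mul' le_rfl (mul_le_mul' le_rfl (mul_le_mul' le_rfl hWIoi))
    _ = 5120 * E := by ring
end
end
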